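/- arXiv:1402.2597 — 4 statements merged into one kernel-verified Lean document; each statement's English description precedes it below -/
import Mathlib

section
/- Let F be a convex quadrilateral with vertices P_1, P_2, P_3, P_4 ∈ ℚ^2_{≥0} and 𝔓 its associated affine convex polygonal semigroup with cone 𝒞 and extremal rays τ_1 (through P_1) and τ_2 (through P_4). If P_1 ∈ 𝔓 ∩ τ_1, P_4 ∈ 𝔓 ∩ τ_2, and the origin O, P_2 and P_3 are collinear, then 𝔓 is Buchsbaum. -/
open Set
open scoped Pointwise

/-- Coercion of a lattice point of `ℕ²` into `ℚ²`. -/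
def toQ (x : Fin 2 → ℕ) : Fin 2 → ℚ := fun i => (x i : ℚ)

/-- The rational cone `L_{ℚ≥}(G)` generated by a subset `G ⊆ ℚ²`. -/
def coneQ (G : Set (Fin 2 → ℚ)) : Set (Fin 2 → ℚ) :=
  {x | ∃ (n : ℕ) (q : Fin n → ℚ) (f : Fin n → (Fin 2 → ℚ)),
    (∀ i, 0 ≤ q i) ∧ (∀ i, f i ∈ G) ∧ x = ∑ i, q i • f i}

/-- The ray from the origin through `v ∈ ℚ²`. -/
def rayQ (v : Fin 2 → ℚ) : Set (Fin 2 → ℚ) := {x | ∃ q : ℚ, 0 ≤ q ∧ x = q • v}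

/-- The lattice points on the ray from the origin through `v`. -/
def rayN (v : Fin 2 → ℕ) : Set (Fin 2 → ℕ) := {x | toQ x ∈ rayQ (toQ v)}

/-- Square of the Euclidean norm of a lattice point. -/
def normSq (x : Fin 2 → ℕ) : ℕ := x 0 ^ 2 + x 1 ^ 2

/-- The cone `𝒞 = L_{ℚ≥}(S) ∩ ℕ²` of a subsemigroup `S ⊆ ℕ²`. -/
def coneN (S : Set (Fin 2 → ℕ)) : Set (Fin 2 → ℕ) := {x | toQ x ∈ coneQ (toQ '' S)}

/-- The interior `int(X)` of `X` relative to the extremal rays through `v1, v2`. -/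
def interiorOf (X : Set (Fin 2 → ℕ)) (v1 v2 : Fin 2 → ℕ) : Set (Fin 2 → ℕ) :=
  X \ (rayN v1 ∪ rayN v2)

/-- `S̄ = {a ∈ ℕ² : a + g ∈ S for every generator g ∈ G}`. -/
def sbar (S : Set (Fin 2 → ℕ)) (G : Finset (Fin 2 → ℕ)) : Set (Fin 2 → ℕ) :=
  {a | ∀ g ∈ G, a + g ∈ S}

/-- `n` is the nonzero element of minimal (Euclidean) norm of `T` on the ray `τ`. -/
def IsMinOnRay (T τ : Set (Fin 2 → ℕ)) (n : Fin 2 → ℕ) : Prop :=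
  n ∈ T ∩ τ ∧ n ≠ 0 ∧ ∀ m ∈ T ∩ τ, m ≠ 0 → normSq n ≤ normSq m

/-- The Cohen–Macaulay criterion for a simplicial semigroup `T ⊆ ℕ²` with cone `C`
and extremal rays `τ1, τ2`: for the minimal elements `n1, n2` of `T` on the two rays,
every `a ∈ C \ T` satisfies `a + n1 ∉ T` or `a + n2 ∉ T`. -/
def IsCMsg (T C τ1 τ2 : Set (Fin 2 → ℕ)) : Prop :=
  ∃ n1 n2 : Fin 2 → ℕ, IsMinOnRay T τ1 n1 ∧ IsMinOnRay T τ2 n2 ∧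
    ∀ a ∈ C \ T, a + n1 ∉ T ∨ a + n2 ∉ T

/-- `S` is Buchsbaum iff (Rosales) the semigroup `S̄` is Cohen–Macaulay. -/
def IsBuchsbaumSG (S : Set (Fin 2 → ℕ)) (G : Finset (Fin 2 → ℕ))
    (C τ1 τ2 : Set (Fin 2 → ℕ)) : Prop :=
  IsCMsg (sbar S G) C τ1 τ2

/-- A subsemigroup of `ℕ²` is generated by a single element. -/
def genByOne (T : Set (Fin 2 → ℕ)) : Prop :=
  ∃ n : Fin 2 → ℕ, T = {x | ∃ k : ℕ, x = k • n}

/-- The circle semigroup of the circle (disk) of center `(a,b)` and radius `r`. -/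
def circleSG (a b r : ℝ) : Set (Fin 2 → ℕ) :=
  {x | ∃ i : ℕ, ((x 0 : ℝ) - i * a) ^ 2 + ((x 1 : ℝ) - i * b) ^ 2 ≤ (i * r) ^ 2}

/-- The convex body semigroup `⋃ i, (i·F ∩ ℕ²)` of a convex body `F ⊆ ℚ²`. -/
def polySG (F : Set (Fin 2 → ℚ)) : Set (Fin 2 → ℕ) :=
  {x | ∃ i : ℕ, toQ x ∈ (i : ℚ) • F}

/-- `G` is a minimal generating set of the semigroup `S`. -/
def minimalGenSet (S : Set (Fin 2 → ℕ)) (G : Finset (Fin 2 → ℕ)) : Prop :=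
  (AddSubmonoid.closure (G : Set (Fin 2 → ℕ)) : Set (Fin 2 → ℕ)) = S ∧
  ∀ g ∈ G, g ∉ (AddSubmonoid.closure ((G.erase g : Finset (Fin 2 → ℕ)) :
    Set (Fin 2 → ℕ)) : Set (Fin 2 → ℕ))

/-- `S` is simplicial with extremal rays through `v1` and `v2`. -/
def Simplicial (S : Set (Fin 2 → ℕ)) (v1 v2 : Fin 2 → ℕ) : Prop :=
  v1 ≠ 0 ∧ v2 ≠ 0 ∧ rayN v1 ≠ rayN v2 ∧
  coneQ (toQ '' S) = coneQ {toQ v1, toQ v2}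

namespace Stmt12Aux

lemma toQ_add (x y : Fin 2 → ℕ) : toQ (x + y) = toQ x + toQ y := by
  funext i; simp [toQ]

lemma toQ_zero : toQ 0 = 0 := by funext i; simp [toQ]

lemma toQ_eq_zero {x : Fin 2 → ℕ} (h : toQ x = 0) : x = 0 := by
  funext i; have := congrFun h i; simpa [toQ] using this

lemma toQ_nonneg (x : Fin 2 → ℕ) (i : Fin 2) : 0 ≤ toQ x i := by
  simp [toQ]

lemma addN_eq_zero {x y : Fin 2 → ℕ} (h : x + y = 0) : x = 0 ∧ y = 0 := by
  have h0 : ∀ i, x i + y i = 0 := fun i => congrFun h i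
  constructor <;> funext i <;> · show _ = 0; have := h0 i; omega

lemma lin_isLinearMap (c0 c1 : ℚ) :
    IsLinearMap ℚ (fun X : Fin 2 → ℚ => c0 * X 0 + c1 * X 1) := by
  constructor
  · intro x y; simp only [Pi.add_apply]; ring
  · intro r x; simp only [Pi.smul_apply, smul_eq_mul]; ring

lemma hull_le {s : Set (Fin 2 → ℚ)} {c0 c1 r : ℚ}
    (h : ∀ p ∈ s, c0 * p 0 + c1 * p 1 ≤ r) {z} (hz : z ∈ convexHull ℚ s) :
    c0 * z 0 + c1 * z 1 ≤ r :=
  convexHull_min h (convex_halfSpace_le (lin_isLinearMap c0 c1) r) hz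

lemma hull_ge {s : Set (Fin 2 → ℚ)} {c0 c1 r : ℚ}
    (h : ∀ p ∈ s, r ≤ c0 * p 0 + c1 * p 1) {z} (hz : z ∈ convexHull ℚ s) :
    r ≤ c0 * z 0 + c1 * z 1 :=
  convexHull_min h (convex_halfSpace_ge (lin_isLinearMap c0 c1) r) hz

lemma mem_coneQ_self {s : Set (Fin 2 → ℚ)} {x : Fin 2 → ℚ} (hx : x ∈ s) :
    x ∈ coneQ s := by
  refine ⟨1, ![1], ![x], ?_, ?_, ?_⟩
  · intro i; fin_cases i; norm_num
  · intro i; fin_cases i; simpa using hx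
  · simp

lemma coneQ_pair {v1 v2 X : Fin 2 → ℚ} :
    X ∈ coneQ {v1, v2} ↔ ∃ α β : ℚ, 0 ≤ α ∧ 0 ≤ β ∧ X = α • v1 + β • v2 := by
  constructor
  · rintro ⟨n, q, f, hq, hf, rfl⟩
    refine ⟨∑ i, if f i = v1 then q i else 0, ∑ i, if f i = v1 then 0 else q i,
      Finset.sum_nonneg fun i _ => ?_, Finset.sum_nonneg fun i _ => ?_, ?_⟩
    · by_cases h : f i = v1 <;> simp [h, hq i]
    · by_cases h : f i = v1 <;> simp [h, hq i]
    rw [Finset.sum_smul, Finset.sum_smul, ← Finset.sum_add_distrib]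
    refine Finset.sum_congr rfl fun i _ => ?_
    rcases hf i with h | h
    · simp [h]
    · rw [Set.mem_singleton_iff] at h
      by_cases h' : f i = v1
      · rw [if_pos h', if_pos h', h', ← h]; simp
      · rw [if_neg h', if_neg h', h]; simp
  · rintro ⟨α, β, hα, hβ, rfl⟩
    refine ⟨2, ![α, β], ![v1, v2], ?_, ?_, ?_⟩
    · intro i; fin_cases i <;> assumption
    · intro i; fin_cases i <;> simp
    · simp [Fin.sum_univ_two]

lemma mem_hull_pair {A B : Fin 2 → ℚ} {θ : ℚ} (h0 : 0 ≤ θ) (h1 : θ ≤ 1) :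
    θ • A + (1 - θ) • B ∈ convexHull ℚ {A, B} := by
  have : θ • A + (1 - θ) • B ∈ segment ℚ A B :=
    ⟨θ, 1 - θ, h0, by linarith, by ring, rfl⟩
  exact segment_subset_convexHull (by simp) (by simp) this

lemma mem_hull_triple {A B C : Fin 2 → ℚ} {θ1 θ2 θ3 : ℚ} (h1 : 0 ≤ θ1)
    (h2 : 0 ≤ θ2) (h3 : 0 ≤ θ3) (hsum : θ1 + θ2 + θ3 = 1) :
    θ1 • A + θ2 • B + θ3 • C ∈ convexHull ℚ ({A, B, C} : Set (Fin 2 → ℚ)) := by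
  have := Finset.centerMass_mem_convexHull (R := ℚ) (s := ({A, B, C} : Set (Fin 2 → ℚ)))
    (Finset.univ : Finset (Fin 3)) (w := ![θ1, θ2, θ3])
    (by intro i _; fin_cases i <;> assumption)
    (by simp [Fin.sum_univ_three]; linarith) (z := ![A, B, C])
    (by intro i _; fin_cases i <;> simp)
  rw [Finset.centerMass] at this
  simpa [Fin.sum_univ_three, hsum] using this

end Stmt12Aux
namespace Stmt12Aux

/-- coordinates w.r.t. basis (v1, v2) -/
noncomputable def Af (v1 v2 X : Fin 2 → ℚ) : ℚ :=
  (X 0 * v2 1 - X 1 * v2 0) / (v1 0 * v2 1 - v1 1 * v2 0)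

noncomputable def Bf (v1 v2 X : Fin 2 → ℚ) : ℚ :=
  (v1 0 * X 1 - v1 1 * X 0) / (v1 0 * v2 1 - v1 1 * v2 0)

section Coord
variable {v1 v2 : Fin 2 → ℚ}

lemma cramer (hD : v1 0 * v2 1 - v1 1 * v2 0 ≠ 0) (X : Fin 2 → ℚ) :
    X = Af v1 v2 X • v1 + Bf v1 v2 X • v2 := by
  funext i
  fin_cases i <;>
  · simp only [Af, Bf, Pi.add_apply, Pi.smul_apply, smul_eq_mul, Fin.zero_eta, Fin.mk_one]
    rw [div_mul_eq_mul_div, div_mul_eq_mul_div, ← add_div, eq_div_iff hD]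
    ring

lemma Af_add (X Y : Fin 2 → ℚ) :
    Af v1 v2 (X + Y) = Af v1 v2 X + Af v1 v2 Y := by
  simp only [Af, Pi.add_apply, ← add_div]; ring_nf

lemma Bf_add (X Y : Fin 2 → ℚ) :
    Bf v1 v2 (X + Y) = Bf v1 v2 X + Bf v1 v2 Y := by
  simp only [Bf, Pi.add_apply, ← add_div]; ring_nf

lemma Af_smul (c : ℚ) (X : Fin 2 → ℚ) : Af v1 v2 (c • X) = c * Af v1 v2 X := by
  simp only [Af, Pi.smul_apply, smul_eq_mul, ← mul_div_assoc]; ring_nf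

lemma Bf_smul (c : ℚ) (X : Fin 2 → ℚ) : Bf v1 v2 (c • X) = c * Bf v1 v2 X := by
  simp only [Bf, Pi.smul_apply, smul_eq_mul, ← mul_div_assoc]; ring_nf

lemma Af_v1 (hD : v1 0 * v2 1 - v1 1 * v2 0 ≠ 0) : Af v1 v2 v1 = 1 :=
  div_self hD

lemma Af_v2 : Af v1 v2 v2 = 0 := by
  simp only [Af]
  rw [show v2 0 * v2 1 - v2 1 * v2 0 = 0 by ring, zero_div]

lemma Bf_v1 : Bf v1 v2 v1 = 0 := by
  simp only [Bf]
  rw [show v1 0 * v1 1 - v1 1 * v1 0 = 0 by ring, zero_div]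

lemma Bf_v2 (hD : v1 0 * v2 1 - v1 1 * v2 0 ≠ 0) : Bf v1 v2 v2 = 1 :=
  div_self hD

lemma Af_zero : Af v1 v2 0 = 0 := by simp [Af]

lemma Bf_zero : Bf v1 v2 0 = 0 := by simp [Bf]

lemma Af_combo (hD : v1 0 * v2 1 - v1 1 * v2 0 ≠ 0) (α β : ℚ) :
    Af v1 v2 (α • v1 + β • v2) = α := by
  rw [Af_add, Af_smul, Af_smul, Af_v1 hD, Af_v2]
  ring

lemma Bf_combo (hD : v1 0 * v2 1 - v1 1 * v2 0 ≠ 0) (α β : ℚ) :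
    Bf v1 v2 (α • v1 + β • v2) = β := by
  rw [Bf_add, Bf_smul, Bf_smul, Bf_v1, Bf_v2 hD]
  ring

lemma Af_swap (X : Fin 2 → ℚ) : Af v2 v1 X = Bf v1 v2 X := by
  simp only [Af, Bf]
  rw [← neg_div_neg_eq]
  ring_nf

lemma Bf_swap (X : Fin 2 → ℚ) : Bf v2 v1 X = Af v1 v2 X := by
  simp only [Af, Bf]
  rw [← neg_div_neg_eq]
  ring_nf

lemma eq_zero_of_coords (hD : v1 0 * v2 1 - v1 1 * v2 0 ≠ 0) {X : Fin 2 → ℚ}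
    (hA : Af v1 v2 X = 0) (hB : Bf v1 v2 X = 0) : X = 0 := by
  have h := cramer hD X
  rw [hA, hB] at h
  simpa using h

end Coord
end Stmt12Aux
namespace Stmt12Aux

section Core
variable {v1 v2 B1 B2 : Fin 2 → ℚ} {t a b : ℚ}

lemma hull_afbf_le (hD : v1 0 * v2 1 - v1 1 * v2 0 ≠ 0) {s : Set (Fin 2 → ℚ)}
    (e f r : ℚ) (hv : ∀ p ∈ s, Af v1 v2 p * e + Bf v1 v2 p * f ≤ r)
    {z : Fin 2 → ℚ} (hz : z ∈ convexHull ℚ s) :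
    Af v1 v2 z * e + Bf v1 v2 z * f ≤ r := by
  set D := v1 0 * v2 1 - v1 1 * v2 0 with hDdef
  have key : ∀ X : Fin 2 → ℚ, Af v1 v2 X * e + Bf v1 v2 X * f =
      ((e * v2 1 - f * v1 1) / D) * X 0 + ((f * v1 0 - e * v2 0) / D) * X 1 := by
    intro X
    simp only [Af, Bf, ← hDdef]
    field_simp
    ring
  rw [key]
  exact hull_le (fun p hp => by rw [← key]; exact hv p hp) hz

lemma hull_afbf_ge (hD : v1 0 * v2 1 - v1 1 * v2 0 ≠ 0) {s : Set (Fin 2 → ℚ)}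
    (e f r : ℚ) (hv : ∀ p ∈ s, r ≤ Af v1 v2 p * e + Bf v1 v2 p * f)
    {z : Fin 2 → ℚ} (hz : z ∈ convexHull ℚ s) :
    r ≤ Af v1 v2 z * e + Bf v1 v2 z * f := by
  set D := v1 0 * v2 1 - v1 1 * v2 0 with hDdef
  have key : ∀ X : Fin 2 → ℚ, Af v1 v2 X * e + Bf v1 v2 X * f =
      ((e * v2 1 - f * v1 1) / D) * X 0 + ((f * v1 0 - e * v2 0) / D) * X 1 := by
    intro X
    simp only [Af, Bf, ← hDdef]
    field_simp
    ring
  rw [key]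
  exact hull_ge (fun p hp => by rw [← key]; exact hv p hp) hz

/-- Values of the coordinates at the four vertices. -/
lemma vertex_coords (hD : v1 0 * v2 1 - v1 1 * v2 0 ≠ 0)
    (hB1 : B1 = t • B2) (hB2 : B2 = a • v1 + b • v2) :
    Af v1 v2 B2 = a ∧ Bf v1 v2 B2 = b ∧ Af v1 v2 B1 = t * a ∧
      Bf v1 v2 B1 = t * b := by
  refine ⟨by rw [hB2, Af_combo hD], by rw [hB2, Bf_combo hD], ?_, ?_⟩
  · rw [hB1, Af_smul, hB2, Af_combo hD]
  · rw [hB1, Bf_smul, hB2, Bf_combo hD]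

/-- Forward direction: linear bounds satisfied by every point of `F`. -/
lemma fwd (hD : v1 0 * v2 1 - v1 1 * v2 0 ≠ 0) (ht0 : 0 < t) (ht1 : t ≤ 1)
    (ha0 : 0 ≤ a) (hb : 0 < b) (hab : 1 ≤ a + b) (htab : t * (a + b) ≤ 1)
    (hB1 : B1 = t • B2) (hB2 : B2 = a • v1 + b • v2)
    {z : Fin 2 → ℚ} (hz : z ∈ convexHull ℚ ({v1, B1, B2, v2} : Set (Fin 2 → ℚ))) :
    Af v1 v2 z * 1 + Bf v1 v2 z * ((1 - a) / b) ≤ 1 ∧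
      1 ≤ Af v1 v2 z * 1 + Bf v1 v2 z * ((1 - t * a) / (t * b)) := by
  obtain ⟨hA2, hB2', hA1, hB1'⟩ := vertex_coords hD hB1 hB2
  have hbne : b ≠ 0 := ne_of_gt hb
  have htne : t ≠ 0 := ne_of_gt ht0
  constructor
  · refine hull_afbf_le hD _ _ _ ?_ hz
    rintro p (rfl | rfl | rfl | rfl)
    · rw [Af_v1 hD, Bf_v1]; norm_num
    · rw [hA1, hB1']
      have : t * b * ((1 - a) / b) = t * (1 - a) := by field_simp
      nlinarith [this]
    · rw [hA2, hB2']
      have : b * ((1 - a) / b) = 1 - a := by field_simp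
      rw [this]; nlinarith
    · rw [Af_v2, Bf_v2 hD]
      have : (1 - a) / b ≤ 1 := by rw [div_le_one hb]; linarith
      nlinarith [this]
  · refine hull_afbf_ge hD _ _ _ ?_ hz
    rintro p (rfl | rfl | rfl | rfl)
    · rw [Af_v1 hD, Bf_v1]; norm_num
    · rw [hA1, hB1']
      have : t * b * ((1 - t * a) / (t * b)) = 1 - t * a := by
        field_simp
      nlinarith [this]
    · rw [hA2, hB2']
      have : b * ((1 - t * a) / (t * b)) = (1 - t * a) / t := by
        field_simp
      rw [this, ← sub_nonneg]
      have h2 : a * 1 + (1 - t * a) / t - 1 = (1 - t) / t := by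
        field_simp; ring
      rw [h2]
      exact div_nonneg (by linarith) ht0.le
    · rw [Af_v2, Bf_v2 hD]
      have h1 : 0 < t * b := by positivity
      rw [zero_mul, zero_add, one_mul, le_div_iff₀ h1]
      nlinarith
/-- Every point of the hull has nonnegative coordinates. -/
lemma fwd_nonneg (hD : v1 0 * v2 1 - v1 1 * v2 0 ≠ 0) (ht0 : 0 < t)
    (ha0 : 0 ≤ a) (hb0 : 0 ≤ b)
    (hB1 : B1 = t • B2) (hB2 : B2 = a • v1 + b • v2)
    {z : Fin 2 → ℚ} (hz : z ∈ convexHull ℚ ({v1, B1, B2, v2} : Set (Fin 2 → ℚ))) :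
    0 ≤ Af v1 v2 z ∧ 0 ≤ Bf v1 v2 z := by
  obtain ⟨hA2, hB2', hA1, hB1'⟩ := vertex_coords hD hB1 hB2
  constructor
  · have := hull_afbf_ge hD 1 0 0 ?_ hz
    · simpa using this
    · rintro p (rfl | rfl | rfl | rfl) <;>
        simp [Af_v1 hD, Af_v2, hA1, hA2] <;> positivity
  · have := hull_afbf_ge hD 0 1 0 ?_ hz
    · simpa using this
    · rintro p (rfl | rfl | rfl | rfl) <;>
        simp [Bf_v1, Bf_v2 hD, hB1', hB2'] <;> positivity

end Core
end Stmt12Aux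
namespace Stmt12Aux

section Core2
variable {v1 v2 B1 B2 : Fin 2 → ℚ} {t a b : ℚ}

/-- Backward direction: construct membership in `k • F` on the `v1`-side. -/
lemma bwd (hD : v1 0 * v2 1 - v1 1 * v2 0 ≠ 0) (ht0 : 0 < t) (ht1 : t < 1)
    (hb : 0 < b) (hB1 : B1 = t • B2) (hB2 : B2 = a • v1 + b • v2)
    {X : Fin 2 → ℚ} (hs : 0 ≤ b * Af v1 v2 X - a * Bf v1 v2 X)
    {k : ℕ} (hk1 : 1 ≤ k)
    (hu : Af v1 v2 X + Bf v1 v2 X * ((1 - a) / b) ≤ (k : ℚ))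
    (hw : (k : ℚ) ≤ Af v1 v2 X + Bf v1 v2 X * ((1 - t * a) / (t * b))) :
    X ∈ (k : ℚ) • convexHull ℚ ({v1, B1, B2, v2} : Set (Fin 2 → ℚ)) := by
  set α := Af v1 v2 X with hα
  set β := Bf v1 v2 X with hβ
  have hbne : b ≠ 0 := ne_of_gt hb
  have htne : t ≠ 0 := ne_of_gt ht0
  have h1t : (0:ℚ) < 1 - t := by linarith
  have h1tne : (1:ℚ) - t ≠ 0 := ne_of_gt h1t
  have hkQ : (0:ℚ) < (k:ℚ) := by exact_mod_cast hk1
  have hkne : (k:ℚ) ≠ 0 := ne_of_gt hkQ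
  set lam := (b * α - a * β) / b with hlam
  set mu := ((k : ℚ) - (α + β * ((1 - a) / b))) / (1 - t) with hmu
  set nu := (k : ℚ) - lam - mu with hnu
  have hlam0 : 0 ≤ lam := div_nonneg hs hb.le
  have hmu0 : 0 ≤ mu := div_nonneg (by linarith) h1t.le
  have hnu0 : 0 ≤ nu := by
    have key : (1 - t) * nu = t * ((α + β * ((1 - t * a) / (t * b))) - k) := by
      rw [hnu, hmu, hlam]
      field_simp
      ring
    nlinarith [key]
  have hsum : lam + mu + nu = (k : ℚ) := by rw [hnu]; ring
  have hc1 : lam + mu * (t * a) + nu * a = α := by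
    rw [hnu, hmu, hlam]
    field_simp
    ring
  have hc2 : mu * (t * b) + nu * b = β := by
    rw [hnu, hmu, hlam]
    field_simp
    ring
  have hcombo : lam • v1 + mu • B1 + nu • B2 = X := by
    rw [hB1, hB2, cramer hD X, ← hα, ← hβ]
    rw [smul_add, smul_add, smul_smul, smul_smul, smul_add, smul_smul, smul_smul]
    rw [← hc1, ← hc2]
    module
  refine Set.mem_smul_set.2 ⟨(lam / k) • v1 + (mu / k) • B1 + (nu / k) • B2, ?_, ?_⟩
  · have hm := mem_hull_triple (A := v1) (B := B1) (C := B2)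
      (div_nonneg hlam0 hkQ.le) (div_nonneg hmu0 hkQ.le) (div_nonneg hnu0 hkQ.le)
      (by rw [← add_div, ← add_div, hsum, div_self hkne])
    refine convexHull_mono ?_ hm
    intro p hp
    rcases hp with rfl | rfl | rfl
    · exact Set.mem_insert _ _
    · exact Set.mem_insert_of_mem _ (Set.mem_insert _ _)
    · exact Set.mem_insert_of_mem _ (Set.mem_insert_of_mem _ (Set.mem_insert _ _))
  · rw [smul_add, smul_add, smul_smul, smul_smul, smul_smul,
      mul_div_cancel₀ _ hkne, mul_div_cancel₀ _ hkne, mul_div_cancel₀ _ hkne]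
    exact hcombo

/-- The one–sided integer step. -/
lemma side (hD : v1 0 * v2 1 - v1 1 * v2 0 ≠ 0) (ht0 : 0 < t) (ht1 : t < 1)
    (ha0 : 0 ≤ a) (hb : 0 < b) (hab : 1 ≤ a + b) (htab : t * (a + b) ≤ 1)
    (hB1 : B1 = t • B2) (hB2 : B2 = a • v1 + b • v2)
    {x n1 : Fin 2 → ℕ} (hXne : toQ x ≠ 0)
    (hα : 0 ≤ Af v1 v2 (toQ x)) (hβ : 0 ≤ Bf v1 v2 (toQ x))
    (hs : 0 ≤ b * Af v1 v2 (toQ x) - a * Bf v1 v2 (toQ x))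
    {k1 : ℕ} (hk1 : 1 ≤ k1) (hn1 : toQ n1 = (k1 : ℚ) • v1)
    {i : ℕ} (hi : toQ (x + n1) ∈ (i : ℚ) • convexHull ℚ ({v1, B1, B2, v2} : Set (Fin 2 → ℚ))) :
    ∃ k : ℕ, toQ x ∈ (k : ℚ) • convexHull ℚ ({v1, B1, B2, v2} : Set (Fin 2 → ℚ)) := by
  set X := toQ x with hX
  obtain ⟨z, hzF, hzk⟩ := Set.mem_smul_set.1 hi
  have hAY : Af v1 v2 (toQ (x + n1)) = Af v1 v2 X + (k1 : ℚ) := by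
    rw [toQ_add, Af_add, hn1, Af_smul, Af_v1 hD, mul_one]
  have hBY : Bf v1 v2 (toQ (x + n1)) = Bf v1 v2 X := by
    rw [toQ_add, Bf_add, hn1, Bf_smul, Bf_v1, mul_zero, add_zero]
  -- i is positive
  have hipos : 1 ≤ i := by
    rcases Nat.eq_zero_or_pos i with h0 | h; swap; · exact h
    exfalso
    subst h0
    rw [← hzk] at hAY hBY
    rw [Nat.cast_zero, zero_smul, Af_zero] at hAY
    rw [Nat.cast_zero, zero_smul, Bf_zero] at hBY
    have hk1Q : (0:ℚ) < (k1:ℚ) := by exact_mod_cast hk1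
    nlinarith [hAY, hα]
  -- bounds for Y = i • z
  obtain ⟨hUz, hWz⟩ := fwd hD ht0 ht1.le ha0 hb hab htab hB1 hB2 hzF
  have hiQ : (0:ℚ) ≤ (i:ℚ) := by positivity
  have hUY : Af v1 v2 X + (k1:ℚ) + Bf v1 v2 X * ((1 - a) / b) ≤ (i:ℚ) := by
    have := mul_le_mul_of_nonneg_left hUz hiQ
    rw [← hAY, ← hBY, ← hzk, Af_smul, Bf_smul] at *
    nlinarith [this]
  have hWY : (i:ℚ) ≤ Af v1 v2 X + (k1:ℚ) + Bf v1 v2 X * ((1 - t * a) / (t * b)) := by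
    have := mul_le_mul_of_nonneg_left hWz hiQ
    rw [← hAY, ← hBY, ← hzk, Af_smul, Bf_smul] at *
    nlinarith [this]
  -- positivity of u(X)
  have hUpos : 0 < Af v1 v2 X + Bf v1 v2 X * ((1 - a) / b) := by
    have hbne : b ≠ 0 := ne_of_gt hb
    have hid : Af v1 v2 X + Bf v1 v2 X * ((1 - a) / b)
        = (b * Af v1 v2 X - a * Bf v1 v2 X) / b + Bf v1 v2 X / b := by
      field_simp
      ring
    rcases eq_or_lt_of_le hβ with hβ0 | hβpos
    · have hApos : 0 < Af v1 v2 X := by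
        rcases eq_or_lt_of_le hα with hA0 | h; swap; · exact h
        exact absurd (eq_zero_of_coords hD hA0.symm hβ0.symm) hXne
      rw [← hβ0]
      simpa using hApos
    · rw [hid]
      have h1 : 0 ≤ (b * Af v1 v2 X - a * Bf v1 v2 X) / b := div_nonneg hs hb.le
      have h2 : 0 < Bf v1 v2 X / b := div_pos hβpos hb
      linarith
  have hk1i : k1 < i := by
    have : (k1:ℚ) < (i:ℚ) := by linarith
    exact_mod_cast this
  refine ⟨i - k1, ?_⟩
  have hcast : ((i - k1 : ℕ) : ℚ) = (i:ℚ) - (k1:ℚ) := by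
    rw [Nat.cast_sub hk1i.le]
  exact bwd hD ht0 ht1 hb hB1 hB2 hs (by omega)
    (by rw [hcast]; linarith) (by rw [hcast]; linarith)

end Core2
end Stmt12Aux
namespace Stmt12Aux

lemma rat_clear {w : Fin 2 → ℚ} (hw : ∀ i, 0 ≤ w i) :
    ∃ (m : Fin 2 → ℕ) (d : ℕ), 0 < d ∧ toQ m = (d : ℚ) • w := by
  have key : ∀ q r : ℚ, 0 ≤ q → ((q.num.toNat * r.den : ℕ) : ℚ)
      = ((q.den * r.den : ℕ) : ℚ) * q := by
    intro q r hq
    have h1 : ((q.num.toNat : ℕ) : ℚ) = ((q.num : ℤ) : ℚ) := by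
      exact_mod_cast congrArg (fun z : ℤ => (z : ℚ))
        (Int.toNat_of_nonneg (Rat.num_nonneg.2 hq))
    push_cast
    rw [h1, ← Rat.mul_den_eq_num q]
    push_cast
    ring
  refine ⟨![(w 0).num.toNat * (w 1).den, (w 1).num.toNat * (w 0).den],
    (w 0).den * (w 1).den, Nat.mul_pos (w 0).pos (w 1).pos, ?_⟩
  funext i
  fin_cases i
  · show ((((w 0).num.toNat * (w 1).den : ℕ)) : ℚ) = _
    rw [key (w 0) (w 1) (hw 0)]
    simp only [Pi.smul_apply, smul_eq_mul]
    push_cast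
    ring
  · show ((((w 1).num.toNat * (w 0).den : ℕ)) : ℚ) = _
    rw [key (w 1) (w 0) (hw 1)]
    simp only [Pi.smul_apply, smul_eq_mul]
    push_cast
    ring

lemma coneQ_coords {v1 v2 : Fin 2 → ℚ} (hD : v1 0 * v2 1 - v1 1 * v2 0 ≠ 0)
    {X : Fin 2 → ℚ} (hX : X ∈ coneQ {v1, v2}) :
    0 ≤ Af v1 v2 X ∧ 0 ≤ Bf v1 v2 X := by
  obtain ⟨α, β, hα, hβ, rfl⟩ := coneQ_pair.1 hX
  rw [Af_combo hD, Bf_combo hD]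
  exact ⟨hα, hβ⟩

lemma exists_isMinOnRay {T τ : Set (Fin 2 → ℕ)} {w : Fin 2 → ℕ}
    (hwT : w ∈ T) (hwτ : w ∈ τ) (hwne : w ≠ 0) : ∃ n, IsMinOnRay T τ n := by
  set Ns : Set ℕ := normSq '' {m | m ∈ T ∩ τ ∧ m ≠ 0} with hNs
  have hne : Ns.Nonempty := ⟨normSq w, ⟨w, ⟨⟨hwT, hwτ⟩, hwne⟩, rfl⟩⟩
  obtain ⟨n, ⟨hn, hne'⟩, hmin⟩ := Nat.sInf_mem hne
  refine ⟨n, hn, hne', fun m hm hmne => ?_⟩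
  rw [hmin]
  exact Nat.sInf_le ⟨m, ⟨hm, hmne⟩, rfl⟩

lemma memS_zero_case {v1 v2 : Fin 2 → ℚ} (hD : v1 0 * v2 1 - v1 1 * v2 0 ≠ 0)
    {F : Set (Fin 2 → ℚ)} {S : Set (Fin 2 → ℕ)} (hSF : S = polySG F)
    (hFc : Convex ℚ F) (h0F : (0 : Fin 2 → ℚ) ∈ F) (hv1F : v1 ∈ F)
    (hv2F : v2 ∈ F) {x : Fin 2 → ℕ} (hx : toQ x ∈ coneQ {v1, v2}) : x ∈ S := by
  obtain ⟨α, β, hα, hβ, hrep⟩ := coneQ_pair.1 hx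
  set k := ⌈α + β⌉₊ with hk
  rcases Nat.eq_zero_or_pos k with hk0 | hkpos
  · have : α + β ≤ 0 := by
      have := Nat.ceil_eq_zero.1 hk0
      exact_mod_cast this
    have hα0 : α = 0 := by linarith
    have hβ0 : β = 0 := by linarith
    have : toQ x = 0 := by rw [hrep, hα0, hβ0]; simp
    rw [hSF]
    exact ⟨0, by rw [this, Nat.cast_zero, Set.zero_smul_set ⟨_, hv1F⟩]; rfl⟩
  · have hkQ : (0:ℚ) < (k:ℚ) := by exact_mod_cast hkpos
    have hkne : (k:ℚ) ≠ 0 := ne_of_gt hkQ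
    have hle : α + β ≤ (k:ℚ) := Nat.le_ceil _
    rw [hSF]
    refine ⟨k, Set.mem_smul_set.2
      ⟨(α / k) • v1 + (β / k) • v2 + (1 - α / k - β / k) • (0 : Fin 2 → ℚ), ?_, ?_⟩⟩
    · have h3 : 0 ≤ 1 - α / k - β / k := by
        have : α / k + β / k ≤ 1 := by
          rw [← add_div, div_le_one hkQ]; exact hle
        linarith
      have hm := mem_hull_triple (A := v1) (B := v2) (C := (0 : Fin 2 → ℚ))
        (div_nonneg hα hkQ.le) (div_nonneg hβ hkQ.le) h3 (by ring)
      refine convexHull_min ?_ hFc hm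
      rintro p (rfl | rfl | rfl) <;> assumption
    · have h0 : (1 - α / k - β / k) • (0 : Fin 2 → ℚ) = 0 := smul_zero _
      rw [h0, add_zero, smul_add, smul_smul, smul_smul,
        mul_div_cancel₀ _ hkne, mul_div_cancel₀ _ hkne]
      exact hrep.symm

end Stmt12Aux
namespace Stmt12Aux

lemma exists_ne_coord {v : Fin 2 → ℚ} (h : v ≠ 0) : v 0 ≠ 0 ∨ v 1 ≠ 0 := by
  by_contra hc
  push_neg at hc
  exact h (by funext i; fin_cases i <;> simp [hc.1, hc.2])

lemma ray_coord_nonneg {v : Fin 2 → ℚ} (hv : ∀ i, 0 ≤ v i) (hvne : v ≠ 0)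
    {n : Fin 2 → ℕ} {c : ℚ} (h : toQ n = c • v) : 0 ≤ c := by
  rcases exists_ne_coord hvne with hj | hj
  · have h0 : toQ n 0 = c * v 0 := by rw [h]; simp
    have := toQ_nonneg n 0
    nlinarith [lt_of_le_of_ne (hv 0) (Ne.symm hj)]
  · have h0 : toQ n 1 = c * v 1 := by rw [h]; simp
    have := toQ_nonneg n 1
    nlinarith [lt_of_le_of_ne (hv 1) (Ne.symm hj)]

lemma rayN_eq_of_smul {p q : Fin 2 → ℕ} {c : ℚ} (hc : 0 < c)
    (h : toQ q = c • toQ p) : rayN p = rayN q := by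
  ext x
  simp only [rayN, rayQ, Set.mem_setOf_eq]
  constructor
  · rintro ⟨r, hr, hx⟩
    refine ⟨r / c, div_nonneg hr hc.le, ?_⟩
    rw [h, smul_smul, div_mul_cancel₀ _ (ne_of_gt hc), hx]
  · rintro ⟨r, hr, hx⟩
    exact ⟨r * c, mul_nonneg hr hc.le, by rw [hx, h, smul_smul]⟩

section RayInt
variable {v1 v2 B1 B2 : Fin 2 → ℚ} {t a b : ℚ} {F : Set (Fin 2 → ℚ)}
  {S : Set (Fin 2 → ℕ)} {G : Finset (Fin 2 → ℕ)}

/-- Any nonzero element of `S` on the ray of `v1` has a positive integer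
`v1`-coordinate. -/
lemma sray_int (hD : v1 0 * v2 1 - v1 1 * v2 0 ≠ 0) (ht0 : 0 < t) (ht1 : t ≤ 1)
    (ha0 : 0 ≤ a) (hb : 0 < b) (hab : 1 ≤ a + b) (htab : t * (a + b) ≤ 1)
    (hB1 : B1 = t • B2) (hB2 : B2 = a • v1 + b • v2)
    (hSF : S = polySG F) (hFeq : F = convexHull ℚ ({v1, B1, B2, v2} : Set (Fin 2 → ℚ)))
    {x : Fin 2 → ℕ} (hxS : x ∈ S) (hxB : Bf v1 v2 (toQ x) = 0) (hxne : x ≠ 0) :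
    ∃ k : ℕ, 1 ≤ k ∧ Af v1 v2 (toQ x) = (k : ℚ) := by
  rw [hSF] at hxS
  obtain ⟨i, hi⟩ := hxS
  rw [hFeq] at hi
  have hipos : 1 ≤ i := by
    rcases Nat.eq_zero_or_pos i with h0 | h; swap; · exact h
    exfalso
    subst h0
    rw [Nat.cast_zero, Set.zero_smul_set] at hi
    · exact hxne (toQ_eq_zero hi)
    · exact ⟨v1, subset_convexHull ℚ _ (Set.mem_insert _ _)⟩
  obtain ⟨z, hzF, hzk⟩ := Set.mem_smul_set.1 hi
  obtain ⟨hUz, hWz⟩ := fwd hD ht0 ht1 ha0 hb hab htab hB1 hB2 hzF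
  have hiQ : (0:ℚ) < (i:ℚ) := by exact_mod_cast hipos
  have hA : Af v1 v2 (toQ x) = (i:ℚ) * Af v1 v2 z := by rw [← hzk, Af_smul]
  have hB : Bf v1 v2 (toQ x) = (i:ℚ) * Bf v1 v2 z := by rw [← hzk, Bf_smul]
  have hBz : Bf v1 v2 z = 0 := by
    have := hxB
    rw [hB] at this
    rcases mul_eq_zero.1 this with h | h
    · exact absurd h (ne_of_gt hiQ)
    · exact h
  rw [hBz, zero_mul, add_zero, mul_one] at hUz hWz
  have : Af v1 v2 z = 1 := le_antisymm hUz hWz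
  exact ⟨i, hipos, by rw [hA, this, mul_one]⟩

/-- There is a nonzero generator on the extremal ray. -/
lemma g_on_ray (hD : v1 0 * v2 1 - v1 1 * v2 0 ≠ 0)
    (hGS : (AddSubmonoid.closure (G : Set (Fin 2 → ℕ)) : Set (Fin 2 → ℕ)) = S)
    (hScone : ∀ x ∈ S, toQ x ∈ coneQ {v1, v2})
    {p1 : Fin 2 → ℕ} (hp1S : p1 ∈ S) (hp1B : Bf v1 v2 (toQ p1) = 0)
    (hp1ne : p1 ≠ 0) :
    ∃ g, g ∈ G ∧ g ≠ 0 ∧ Bf v1 v2 (toQ g) = 0 := by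
  have hBnn : ∀ x ∈ S, 0 ≤ Bf v1 v2 (toQ x) := fun x hx =>
    (coneQ_coords hD (hScone x hx)).2
  have hp1c : p1 ∈ AddSubmonoid.closure (G : Set (Fin 2 → ℕ)) := by
    rw [← hGS] at hp1S; exact hp1S
  set R : Set (Fin 2 → ℕ) := (G : Set (Fin 2 → ℕ)) ∩ {m | Bf v1 v2 (toQ m) = 0}
    with hR
  have step1 : p1 ∈ AddSubmonoid.closure R := by
    have : Bf v1 v2 (toQ p1) = 0 → p1 ∈ AddSubmonoid.closure R :=
      AddSubmonoid.closure_induction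
      (motive := fun x _ => Bf v1 v2 (toQ x) = 0 → x ∈ AddSubmonoid.closure R)
      (fun x h hB => AddSubmonoid.subset_closure ⟨h, hB⟩)
      (fun _ => AddSubmonoid.zero_mem _)
      (fun x y hx hy ihx ihy hB => by
        have hxS : x ∈ S := by rw [← hGS]; exact hx
        have hyS : y ∈ S := by rw [← hGS]; exact hy
        have hsum : Bf v1 v2 (toQ x) + Bf v1 v2 (toQ y) = 0 := by
          rw [← Bf_add, ← toQ_add]; exact hB
        have hx0 : Bf v1 v2 (toQ x) = 0 :=
          le_antisymm (by linarith [hBnn y hyS]) (hBnn x hxS)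
        have hy0 : Bf v1 v2 (toQ y) = 0 :=
          le_antisymm (by linarith [hBnn x hxS]) (hBnn y hyS)
        exact AddSubmonoid.add_mem _ (ihx hx0) (ihy hy0)) hp1c
    exact this hp1B
  have step2 : p1 = 0 ∨ ∃ g, g ∈ G ∧ g ≠ 0 ∧ Bf v1 v2 (toQ g) = 0 :=
    AddSubmonoid.closure_induction
    (motive := fun x (_ : x ∈ AddSubmonoid.closure R) => x = 0 ∨ ∃ g, g ∈ G ∧ g ≠ 0 ∧ Bf v1 v2 (toQ g) = 0)
    (fun x h => by
      by_cases hx0 : x = 0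
      · exact Or.inl hx0
      · exact Or.inr ⟨x, h.1, hx0, h.2⟩)
    (Or.inl rfl)
    (fun x y _ _ ihx ihy => by
      rcases ihx with rfl | hg
      · rcases ihy with rfl | hg
        · exact Or.inl (by simp)
        · exact Or.inr hg
      · exact Or.inr hg) step1
  rcases step2 with h0 | hg
  · exact absurd h0 hp1ne
  · exact hg

/-- Every nonzero element of `s̄` on the extremal ray is a positive integer
multiple of `v1`. -/
lemma tray_int (hD : v1 0 * v2 1 - v1 1 * v2 0 ≠ 0) (ht0 : 0 < t) (ht1 : t ≤ 1)
    (ha0 : 0 ≤ a) (hb : 0 < b) (hab : 1 ≤ a + b) (htab : t * (a + b) ≤ 1)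
    (hB1 : B1 = t • B2) (hB2 : B2 = a • v1 + b • v2)
    (hSF : S = polySG F) (hFeq : F = convexHull ℚ ({v1, B1, B2, v2} : Set (Fin 2 → ℚ)))
    (hGS : (AddSubmonoid.closure (G : Set (Fin 2 → ℕ)) : Set (Fin 2 → ℕ)) = S)
    (hScone : ∀ x ∈ S, toQ x ∈ coneQ {v1, v2})
    (hv1c : ∀ i, 0 ≤ v1 i) (hv1ne : v1 ≠ 0)
    {p1 : Fin 2 → ℕ} (hp1S : p1 ∈ S) (hp1v : toQ p1 = v1)
    {n : Fin 2 → ℕ} (hn : n ∈ sbar S G) (hnB : Bf v1 v2 (toQ n) = 0)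
    (hnne : n ≠ 0) :
    ∃ k : ℕ, 1 ≤ k ∧ toQ n = (k : ℚ) • v1 := by
  have hp1ne : p1 ≠ 0 := by
    intro h
    rw [h, toQ_zero] at hp1v
    exact hv1ne hp1v.symm
  obtain ⟨g, hgG, hgne, hgB⟩ := g_on_ray hD hGS hScone hp1S
    (by rw [hp1v, Bf_v1]) hp1ne
  have hngS : n + g ∈ S := hn g hgG
  have hngB : Bf v1 v2 (toQ (n + g)) = 0 := by
    rw [toQ_add, Bf_add, hnB, hgB, add_zero]
  have hngne : n + g ≠ 0 := fun h => hgne (addN_eq_zero h).2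
  obtain ⟨k', hk'1, hk'⟩ := sray_int hD ht0 ht1 ha0 hb hab htab hB1 hB2 hSF hFeq
    hngS hngB hngne
  obtain ⟨k'', hk''1, hk''⟩ := sray_int hD ht0 ht1 ha0 hb hab htab hB1 hB2 hSF hFeq
    (hGS ▸ AddSubmonoid.subset_closure hgG) hgB hgne
  have hnrep : toQ n = Af v1 v2 (toQ n) • v1 := by
    have := cramer hD (toQ n)
    rw [hnB, zero_smul, add_zero] at this
    exact this
  have hAn : Af v1 v2 (toQ n) = (k' : ℚ) - (k'' : ℚ) := by
    have : Af v1 v2 (toQ (n + g)) = Af v1 v2 (toQ n) + Af v1 v2 (toQ g) := by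
      rw [toQ_add, Af_add]
    rw [hk', hk''] at this
    linarith
  have hAnn : 0 ≤ Af v1 v2 (toQ n) := ray_coord_nonneg hv1c hv1ne hnrep
  have hAnz : Af v1 v2 (toQ n) ≠ 0 := by
    intro h
    exact hnne (toQ_eq_zero (eq_zero_of_coords hD h hnB))
  have hlt : k'' < k' := by
    by_contra hle
    push_neg at hle
    have : (k' : ℚ) ≤ (k'' : ℚ) := by exact_mod_cast hle
    have : Af v1 v2 (toQ n) ≤ 0 := by rw [hAn]; linarith
    rcases lt_or_eq_of_le this with h | h
    · linarith [hAnn]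
    · exact hAnz h
  refine ⟨k' - k'', by omega, ?_⟩
  rw [hnrep, hAn, Nat.cast_sub hlt.le]

end RayInt
end Stmt12Aux
namespace Stmt12Aux

lemma ray_combo {v : Fin 2 → ℚ} {e1 e2 e3 l : ℚ} (h : l * e2 + (1 - l) * e3 = e1) :
    l • (e2 • v) + (1 - l) • (e3 • v) = e1 • v := by
  rw [smul_smul, smul_smul, ← add_smul, h]

lemma ray_three_contra {v Q1 Q2 : Fin 2 → ℚ} {t c : ℚ} (ht0 : 0 < t) (ht1 : t < 1)
    (hc : 0 < c) (hQ2 : Q2 = c • v) (hQ1 : Q1 = (t * c) • v)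
    (h1 : Q1 ∉ convexHull ℚ ({v, Q2} : Set (Fin 2 → ℚ)))
    (h2 : Q2 ∉ convexHull ℚ ({Q1, v} : Set (Fin 2 → ℚ)))
    (h3 : v ∉ convexHull ℚ ({Q1, Q2} : Set (Fin 2 → ℚ))) : False := by
  rcases le_or_gt 1 (t * c) with hcase | hcase
  · have hbgt : 1 < c := by nlinarith
    have hden : (0:ℚ) < c - 1 := by linarith
    set l := (c - t * c) / (c - 1) with hl
    have h0 : 0 ≤ l := div_nonneg (by nlinarith) hden.le
    have h1' : l ≤ 1 := by rw [div_le_one hden]; linarith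
    have hco : l * 1 + (1 - l) * c = t * c := by
      rw [hl]; field_simp; ring
    apply h1
    have hm := mem_hull_pair (A := v) (B := Q2) h0 h1'
    have hcombo : l • v + (1 - l) • Q2 = Q1 := by
      rw [hQ2, hQ1]
      nth_rewrite 1 [← one_smul ℚ v]
      exact ray_combo hco
    rwa [hcombo] at hm
  rcases le_or_gt 1 c with hcase2 | hcase2
  · have hden : (0:ℚ) < c - t * c := by nlinarith
    set l := (c - 1) / (c - t * c) with hl
    have h0 : 0 ≤ l := div_nonneg (by linarith) hden.le
    have h1' : l ≤ 1 := by rw [div_le_one hden]; linarith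
    have hco : l * (t * c) + (1 - l) * c = 1 := by
      have hl' : l * (c - t * c) = c - 1 := by
        rw [hl]; exact div_mul_cancel₀ _ hden.ne'
      linear_combination -hl'
    apply h3
    have hm := mem_hull_pair (A := Q1) (B := Q2) h0 h1'
    have hcombo : l • Q1 + (1 - l) • Q2 = v := by
      rw [hQ2, hQ1]
      conv_rhs => rw [← one_smul ℚ v]
      exact ray_combo hco
    rwa [hcombo] at hm
  · have hden : (0:ℚ) < 1 - t * c := by nlinarith
    set l := (1 - c) / (1 - t * c) with hl
    have h0 : 0 ≤ l := div_nonneg (by linarith) hden.le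
    have h1' : l ≤ 1 := by rw [div_le_one hden]; nlinarith
    have hco : l * (t * c) + (1 - l) * 1 = c := by
      have hl' : l * (1 - t * c) = 1 - c := by
        rw [hl]; exact div_mul_cancel₀ _ hden.ne'
      linear_combination -hl'
    apply h2
    have hm := mem_hull_pair (A := Q1) (B := v) h0 h1'
    have hcombo : l • Q1 + (1 - l) • v = Q2 := by
      rw [hQ2, hQ1]
      nth_rewrite 2 [← one_smul ℚ v]
      exact ray_combo hco
    rwa [hcombo] at hm

lemma nondeg {v1 v2 Q1 Q2 : Fin 2 → ℚ} {t : ℚ}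
    (hD : v1 0 * v2 1 - v1 1 * v2 0 ≠ 0) (ht0 : 0 < t) (ht1 : t < 1)
    (hQ1 : Q1 = t • Q2) (hQ2ne : Q2 ≠ 0)
    (hQ2cone : Q2 ∈ coneQ {v1, v2})
    (hnm1 : Q1 ∉ convexHull ℚ ({v1, Q2, v2} : Set (Fin 2 → ℚ)))
    (hnm2 : Q2 ∉ convexHull ℚ ({v1, Q1, v2} : Set (Fin 2 → ℚ)))
    (hnmv1 : v1 ∉ convexHull ℚ ({Q1, Q2} : Set (Fin 2 → ℚ)))
    (hnmv2 : v2 ∉ convexHull ℚ ({Q1, Q2} : Set (Fin 2 → ℚ))) :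
    0 < Af v1 v2 Q2 ∧ 0 < Bf v1 v2 Q2 ∧ 1 < Af v1 v2 Q2 + Bf v1 v2 Q2 ∧
      t * (Af v1 v2 Q2 + Bf v1 v2 Q2) < 1 := by
  obtain ⟨ha0, hb0⟩ := coneQ_coords hD hQ2cone
  set a := Af v1 v2 Q2 with hadef
  set b := Bf v1 v2 Q2 with hbdef
  have hrep : Q2 = a • v1 + b • v2 := cramer hD Q2
  have hsub1 : ({v2, Q2} : Set (Fin 2 → ℚ)) ⊆ {v1, Q2, v2} := by
    intro p hp; simp only [Set.mem_insert_iff, Set.mem_singleton_iff] at hp ⊢; tauto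
  have hsub2 : ({Q1, v2} : Set (Fin 2 → ℚ)) ⊆ {v1, Q1, v2} := by
    intro p hp; simp only [Set.mem_insert_iff, Set.mem_singleton_iff] at hp ⊢; tauto
  have hsub3 : ({v1, Q2} : Set (Fin 2 → ℚ)) ⊆ {v1, Q2, v2} := by
    intro p hp; simp only [Set.mem_insert_iff, Set.mem_singleton_iff] at hp ⊢; tauto
  have hsub4 : ({Q1, v1} : Set (Fin 2 → ℚ)) ⊆ {v1, Q1, v2} := by
    intro p hp; simp only [Set.mem_insert_iff, Set.mem_singleton_iff] at hp ⊢; tauto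
  have ha : 0 < a := by
    rcases lt_or_eq_of_le ha0 with h | h
    · exact h
    exfalso
    have hQ2v : Q2 = b • v2 := by rw [hrep, ← h, zero_smul, zero_add]
    have hbpos : 0 < b := by
      rcases lt_or_eq_of_le hb0 with h' | h'
      · exact h'
      · exact absurd (by rw [hQ2v, ← h', zero_smul]) hQ2ne
    exact ray_three_contra ht0 ht1 hbpos hQ2v
      (by rw [hQ1, hQ2v, smul_smul])
      (fun hm => hnm1 (convexHull_mono hsub1 hm))
      (fun hm => hnm2 (convexHull_mono hsub2 hm)) hnmv2
  have hb : 0 < b := by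
    rcases lt_or_eq_of_le hb0 with h | h
    · exact h
    exfalso
    have hQ2v : Q2 = a • v1 := by rw [hrep, ← h, zero_smul, add_zero]
    exact ray_three_contra ht0 ht1 ha hQ2v
      (by rw [hQ1, hQ2v, smul_smul])
      (fun hm => hnm1 (convexHull_mono hsub3 hm))
      (fun hm => hnm2 (convexHull_mono hsub4 hm)) hnmv1
  have hab : 1 < a + b := by
    by_contra hle
    push_neg at hle
    have hden : (0:ℚ) < 1 - t * (a + b) := by nlinarith
    set l := (1 - (a + b)) / (1 - t * (a + b)) with hl
    have h0 : 0 ≤ l := div_nonneg (by linarith) hden.le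
    have hl1 : l ≤ 1 := by rw [hl, div_le_one hden]; nlinarith
    have hlt : 0 ≤ 1 - l * t := by nlinarith
    have hsum : l + a * (1 - l * t) + b * (1 - l * t) = 1 := by
      have hne : 1 - t * (a + b) ≠ 0 := hden.ne'
      have hl' : l * (1 - t * (a + b)) = 1 - (a + b) := by
        rw [hl]; exact div_mul_cancel₀ _ hne
      linear_combination hl'
    have hm := mem_hull_triple (A := Q1) (B := v1) (C := v2) h0
      (mul_nonneg ha.le hlt) (mul_nonneg hb.le hlt) hsum
    have hcombo : l • Q1 + (a * (1 - l * t)) • v1 + (b * (1 - l * t)) • v2 = Q2 := by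
      rw [hQ1, hrep]
      module
    rw [hcombo] at hm
    refine hnm2 (convexHull_mono ?_ hm)
    intro p hp; simp only [Set.mem_insert_iff, Set.mem_singleton_iff] at hp ⊢; tauto
  have htab : t * (a + b) < 1 := by
    by_contra hle
    push_neg at hle
    have hden : (0:ℚ) < a + b - 1 := by linarith
    set l := (t * (a + b) - 1) / (a + b - 1) with hl
    have h0 : 0 ≤ l := div_nonneg (by linarith) hden.le
    have hlt : l ≤ t := by rw [hl, div_le_iff₀ hden]; nlinarith
    have hsum : l + a * (t - l) + b * (t - l) = 1 := by
      rw [hl]; field_simp; ring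
    have hm := mem_hull_triple (A := Q2) (B := v1) (C := v2) h0
      (mul_nonneg ha.le (by linarith)) (mul_nonneg hb.le (by linarith)) hsum
    have hcombo : l • Q2 + (a * (t - l)) • v1 + (b * (t - l)) • v2 = Q1 := by
      rw [hQ1, hrep]
      module
    rw [hcombo] at hm
    refine hnm1 (convexHull_mono ?_ hm)
    intro p hp; simp only [Set.mem_insert_iff, Set.mem_singleton_iff] at hp ⊢; tauto
  exact ⟨ha, hb, hab, htab⟩

end Stmt12Aux
namespace Stmt12Aux

lemma range_fin4 (P : Fin 4 → (Fin 2 → ℚ)) :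
    Set.range P = {P 0, P 1, P 2, P 3} := by
  ext x
  constructor
  · rintro ⟨i, rfl⟩
    fin_cases i <;> simp [Set.mem_insert_iff]
  · intro h
    simp only [Set.mem_insert_iff, Set.mem_singleton_iff] at h
    rcases h with rfl | rfl | rfl | rfl <;> exact ⟨_, rfl⟩

end Stmt12Aux

set_option maxHeartbeats 2000000 in
open Stmt12Aux in
/-- Let `F` be a convex quadrilateral with rational vertices
`P_1, …, P_4` in the nonnegative quadrant with `P_1 ∈ 𝔓 ∩ τ_1`, `P_4 ∈ 𝔓 ∩ τ_2`,
and `O, P_2, P_3` collinear. Then `𝔓` is Buchsbaum. -/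
theorem stmt12 (P : Fin 4 → (Fin 2 → ℚ)) (hpos : ∀ j i, 0 ≤ P j i)
    (hvert : ∀ j, P j ∉ convexHull ℚ (P '' {k | k ≠ j}))
    (S : Set (Fin 2 → ℕ)) (hS : S = polySG (convexHull ℚ (Set.range P)))
    (G : Finset (Fin 2 → ℕ)) (hG : minimalGenSet S G)
    (p1 p4 : Fin 2 → ℕ) (h1 : toQ p1 = P 0) (h4 : toQ p4 = P 3)
    (hsimp : Simplicial S p1 p4)
    (hp1S : p1 ∈ S) (hp4S : p4 ∈ S)
    (hcol : Collinear ℚ {0, P 1, P 2}) :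
    IsBuchsbaumSG S G (coneN S) (rayN p1) (rayN p4) := by
  classical
  obtain ⟨hp1ne, hp4ne, hraydiff, hconeEq⟩ := hsimp
  set v1 : Fin 2 → ℚ := toQ p1 with hv1def
  set v2 : Fin 2 → ℚ := toQ p4 with hv2def
  have hv1c : ∀ i, 0 ≤ v1 i := fun i => toQ_nonneg p1 i
  have hv2c : ∀ i, 0 ≤ v2 i := fun i => toQ_nonneg p4 i
  have hv1ne0 : v1 ≠ 0 := fun h => hp1ne (toQ_eq_zero h)
  have hv2ne0 : v2 ≠ 0 := fun h => hp4ne (toQ_eq_zero h)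
  -- linear independence of the extremal directions
  have hD : v1 0 * v2 1 - v1 1 * v2 0 ≠ 0 := by
    intro hD0
    apply hraydiff
    have hkey : v1 0 * v2 1 = v1 1 * v2 0 := by linarith
    rcases exists_ne_coord hv1ne0 with hj | hj
    · have hjpos : 0 < v1 0 := lt_of_le_of_ne (hv1c 0) (Ne.symm hj)
      have hc : toQ p4 = (v2 0 / v1 0) • toQ p1 := by
        funext i
        fin_cases i
        · show v2 0 = v2 0 / v1 0 * v1 0
          field_simp
        · show v2 1 = v2 0 / v1 0 * v1 1
          rw [div_mul_eq_mul_div, eq_div_iff hj]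
          nlinarith [hkey]
      have hcpos : 0 < v2 0 / v1 0 := by
        rcases lt_or_eq_of_le (div_nonneg (hv2c 0) (hv1c 0)) with h | h
        · exact h
        · exfalso
          apply hp4ne
          apply toQ_eq_zero
          rw [hc, ← h, zero_smul]
      exact rayN_eq_of_smul hcpos hc
    · have hjpos : 0 < v1 1 := lt_of_le_of_ne (hv1c 1) (Ne.symm hj)
      have hc : toQ p4 = (v2 1 / v1 1) • toQ p1 := by
        funext i
        fin_cases i
        · show v2 0 = v2 1 / v1 1 * v1 0
          rw [div_mul_eq_mul_div, eq_div_iff hj]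
          nlinarith [hkey]
        · show v2 1 = v2 1 / v1 1 * v1 1
          field_simp
      have hcpos : 0 < v2 1 / v1 1 := by
        rcases lt_or_eq_of_le (div_nonneg (hv2c 1) (hv1c 1)) with h | h
        · exact h
        · exfalso
          apply hp4ne
          apply toQ_eq_zero
          rw [hc, ← h, zero_smul]
      exact rayN_eq_of_smul hcpos hc
  obtain ⟨hGS, hGmin⟩ := hG
  have hGsub : (G : Set (Fin 2 → ℕ)) ⊆ S := by
    rw [← hGS]; exact AddSubmonoid.subset_closure
  have h0S : (0 : Fin 2 → ℕ) ∈ S := by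
    rw [← hGS]; exact AddSubmonoid.zero_mem _
  have haddS : ∀ x ∈ S, ∀ y ∈ S, x + y ∈ S := by
    intro x hx y hy
    rw [← hGS] at hx hy ⊢
    exact AddSubmonoid.add_mem _ hx hy
  have hSsbar : S ⊆ sbar S G := fun s hs g hg => haddS s hs g (hGsub hg)
  have hScone : ∀ x ∈ S, toQ x ∈ coneQ {v1, v2} := by
    intro x hx
    rw [← hconeEq]
    exact mem_coneQ_self ⟨x, hx, rfl⟩
  have hC : coneN S = {x | toQ x ∈ coneQ {v1, v2}} := by
    unfold coneN
    rw [hconeEq]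
  set F : Set (Fin 2 → ℚ) := convexHull ℚ (Set.range P) with hFdef
  have hSF : S = polySG F := hS
  have hPF : ∀ j, P j ∈ F := fun j => subset_convexHull ℚ _ ⟨j, rfl⟩
  have hPcone : ∀ j, P j ∈ coneQ {v1, v2} := by
    intro j
    obtain ⟨m, d, hdpos, hmd⟩ := rat_clear (hpos j)
    have hmS : m ∈ S := by
      rw [hSF]
      exact ⟨d, Set.mem_smul_set.2 ⟨P j, hPF j, hmd.symm⟩⟩
    obtain ⟨α, β, hα, hβ, hrepm⟩ := coneQ_pair.1 (hScone m hmS)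
    have hdQ : (0:ℚ) < (d:ℚ) := by exact_mod_cast hdpos
    refine coneQ_pair.2 ⟨α / d, β / d, div_nonneg hα hdQ.le,
      div_nonneg hβ hdQ.le, ?_⟩
    have hPj : P j = (d:ℚ)⁻¹ • toQ m := by
      rw [hmd, smul_smul, inv_mul_cancel₀ (ne_of_gt hdQ), one_smul]
    rw [hPj, hrepm, smul_add, smul_smul, smul_smul, inv_mul_eq_div, inv_mul_eq_div]
  -- minimal ray elements of s̄
  have hp1ray : p1 ∈ rayN p1 := ⟨1, zero_le_one, (one_smul ℚ _).symm⟩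
  have hp4ray : p4 ∈ rayN p4 := ⟨1, zero_le_one, (one_smul ℚ _).symm⟩
  obtain ⟨n1, hmin1⟩ := exists_isMinOnRay (hSsbar hp1S) hp1ray hp1ne
  obtain ⟨n2, hmin2⟩ := exists_isMinOnRay (hSsbar hp4S) hp4ray hp4ne
  refine ⟨n1, n2, hmin1, hmin2, ?_⟩
  rintro aa ⟨haC, haT⟩
  by_contra hcon
  rw [not_or, not_not, not_not] at hcon
  obtain ⟨hn1T, hn2T⟩ := hcon
  simp only [sbar, Set.mem_setOf_eq] at haT
  push_neg at haT
  obtain ⟨g, hgG, hgS⟩ := haT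
  rw [hC] at haC
  have h0G : (0 : Fin 2 → ℕ) ∉ G := fun h => hGmin 0 h (AddSubmonoid.zero_mem _)
  have hgne : g ≠ 0 := fun h => h0G (h ▸ hgG)
  by_cases hzero : P 1 = 0 ∨ P 2 = 0
  · -- degenerate case: the origin is a vertex
    have h0F : (0 : Fin 2 → ℚ) ∈ F := by
      rcases hzero with h | h
      · rw [← h]; exact hPF 1
      · rw [← h]; exact hPF 2
    have haS : aa ∈ S := memS_zero_case hD hSF (convex_convexHull ℚ _) h0F
      (h1 ▸ hPF 0) (h4 ▸ hPF 3) haC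
    exact hgS (haddS aa haS g (hGsub hgG))
  · push_neg at hzero
    obtain ⟨hP1ne, hP2ne⟩ := hzero
    -- collinearity through the origin
    obtain ⟨dir, hdir⟩ := (collinear_iff_of_mem
      (Set.mem_insert (0 : Fin 2 → ℚ) _)).1 hcol
    obtain ⟨r1, hr1⟩ := hdir (P 1) (by simp)
    obtain ⟨r2, hr2⟩ := hdir (P 2) (by simp)
    rw [vadd_eq_add, add_zero] at hr1 hr2
    have hr2ne : r2 ≠ 0 := by
      intro h
      exact hP2ne (by rw [hr2, h, zero_smul])
    set t0 := r1 / r2 with ht0def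
    have hP1t : P 1 = t0 • P 2 := by
      rw [hr2, smul_smul, div_mul_cancel₀ _ hr2ne, ← hr1]
    have ht0nz : t0 ≠ 0 := by
      intro h
      exact hP1ne (by rw [hP1t, h, zero_smul])
    have ht0pos : 0 < t0 := by
      rcases exists_ne_coord hP2ne with hj | hj
      · have h2pos : 0 < P 2 0 := lt_of_le_of_ne (hpos 2 0) (Ne.symm hj)
        have hco : P 1 0 = t0 * P 2 0 := by rw [hP1t]; simp
        have := hpos 1 0
        rcases lt_or_eq_of_le (show (0:ℚ) ≤ t0 by nlinarith) with h | h
        · exact h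
        · exact absurd h.symm ht0nz
      · have h2pos : 0 < P 2 1 := lt_of_le_of_ne (hpos 2 1) (Ne.symm hj)
        have hco : P 1 1 = t0 * P 2 1 := by rw [hP1t]; simp
        have := hpos 1 1
        rcases lt_or_eq_of_le (show (0:ℚ) ≤ t0 by nlinarith) with h | h
        · exact h
        · exact absurd h.symm ht0nz
    have ht0ne1 : t0 ≠ 1 := by
      intro h
      rw [h, one_smul] at hP1t
      refine hvert 1 (subset_convexHull ℚ _ ⟨2, ?_, hP1t.symm⟩)
      show (2 : Fin 4) ≠ 1
      decide
    -- the four non-membership facts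
    have hnmA : P 1 ∉ convexHull ℚ ({v1, P 2, v2} : Set (Fin 2 → ℚ)) := by
      intro hm
      refine hvert 1 (convexHull_mono ?_ hm)
      rintro p (rfl | rfl | rfl)
      · exact ⟨0, by decide, h1.symm⟩
      · exact ⟨2, by decide, rfl⟩
      · exact ⟨3, by decide, h4.symm⟩
    have hnmB : P 2 ∉ convexHull ℚ ({v1, P 1, v2} : Set (Fin 2 → ℚ)) := by
      intro hm
      refine hvert 2 (convexHull_mono ?_ hm)
      rintro p (rfl | rfl | rfl)
      · exact ⟨0, by decide, h1.symm⟩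
      · exact ⟨1, by decide, rfl⟩
      · exact ⟨3, by decide, h4.symm⟩
    have hnmC : v1 ∉ convexHull ℚ ({P 1, P 2} : Set (Fin 2 → ℚ)) := by
      intro hm
      rw [h1] at hm
      refine hvert 0 (convexHull_mono ?_ hm)
      rintro p (rfl | rfl)
      · exact ⟨1, by decide, rfl⟩
      · exact ⟨2, by decide, rfl⟩
    have hnmD : v2 ∉ convexHull ℚ ({P 1, P 2} : Set (Fin 2 → ℚ)) := by
      intro hm
      rw [h4] at hm
      refine hvert 3 (convexHull_mono ?_ hm)
      rintro p (rfl | rfl)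
      · exact ⟨1, by decide, rfl⟩
      · exact ⟨2, by decide, rfl⟩
    have hrange : Set.range P = ({v1, P 1, P 2, v2} : Set (Fin 2 → ℚ)) := by
      rw [range_fin4 P, h1, h4]
    -- the main engine
    have main : ∀ (Q1 Q2 : Fin 2 → ℚ) (t : ℚ), 0 < t → t < 1 → Q1 = t • Q2 →
        Q2 ≠ 0 → Set.range P = ({v1, Q1, Q2, v2} : Set (Fin 2 → ℚ)) →
        Q1 ∉ convexHull ℚ ({v1, Q2, v2} : Set (Fin 2 → ℚ)) →
        Q2 ∉ convexHull ℚ ({v1, Q1, v2} : Set (Fin 2 → ℚ)) →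
        v1 ∉ convexHull ℚ ({Q1, Q2} : Set (Fin 2 → ℚ)) →
        v2 ∉ convexHull ℚ ({Q1, Q2} : Set (Fin 2 → ℚ)) →
        Q2 ∈ coneQ {v1, v2} → False := by
      intro Q1 Q2 t ht0 ht1 hQ1t hQ2ne hrangeQ hnm1 hnm2 hnmv1 hnmv2 hQ2cone
      obtain ⟨ha, hb, hab, htab⟩ := nondeg hD ht0 ht1 hQ1t hQ2ne hQ2cone
        hnm1 hnm2 hnmv1 hnmv2
      set a := Af v1 v2 Q2 with hadef
      set b := Bf v1 v2 Q2 with hbdef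
      have hrep : Q2 = a • v1 + b • v2 := cramer hD Q2
      have hFeq : F = convexHull ℚ ({v1, Q1, Q2, v2} : Set (Fin 2 → ℚ)) := by
        rw [hFdef, hrangeQ]
      -- n1 and n2 are integral multiples of v1, v2
      obtain ⟨q1, hq10, hq1⟩ := hmin1.1.2
      have hn1B : Bf v1 v2 (toQ n1) = 0 := by
        rw [hq1, Bf_smul, Bf_v1, mul_zero]
      obtain ⟨k1, hk11, hk1⟩ := tray_int hD ht0 ht1.le ha.le hb hab.le htab.le
        hQ1t hrep hSF hFeq hGS hScone hv1c hv1ne0 hp1S rfl hmin1.1.1 hn1B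
        hmin1.2.1
      -- swapped context
      have hD' : v2 0 * v1 1 - v2 1 * v1 0 ≠ 0 := fun h => hD (by linarith)
      have hsetswap : ({v2, Q1, Q2, v1} : Set (Fin 2 → ℚ)) = {v1, Q1, Q2, v2} := by
        ext z
        simp only [Set.mem_insert_iff, Set.mem_singleton_iff]
        tauto
      have hFeq' : F = convexHull ℚ ({v2, Q1, Q2, v1} : Set (Fin 2 → ℚ)) := by
        rw [hFeq, hsetswap]
      have hpairswap : ({v2, v1} : Set (Fin 2 → ℚ)) = {v1, v2} :=
        Set.pair_comm v2 v1
      have hScone' : ∀ x ∈ S, toQ x ∈ coneQ {v2, v1} := by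
        intro x hx
        rw [hpairswap]
        exact hScone x hx
      have hrep' : Q2 = b • v2 + a • v1 := by rw [hrep]; exact add_comm _ _
      have htab' : t * (b + a) ≤ 1 := by rw [add_comm b a]; exact htab.le
      obtain ⟨q2, hq20, hq2⟩ := hmin2.1.2
      have hn2B : Bf v2 v1 (toQ n2) = 0 := by
        rw [Bf_swap, hq2, Af_smul, Af_v2, mul_zero]
      obtain ⟨k2, hk21, hk2⟩ := tray_int hD' ht0 ht1.le hb.le ha
        (by linarith) htab' hQ1t hrep' hSF hFeq' hGS hScone' hv2c hv2ne0
        hp4S rfl hmin2.1.1 hn2B hmin2.2.1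
      -- the bad element x = aa + g
      obtain ⟨hαa, hβa⟩ := coneQ_coords hD haC
      obtain ⟨hαg, hβg⟩ := coneQ_coords hD (hScone g (hGsub hgG))
      have hxA : Af v1 v2 (toQ (aa + g)) = Af v1 v2 (toQ aa) + Af v1 v2 (toQ g) := by
        rw [toQ_add, Af_add]
      have hxB : Bf v1 v2 (toQ (aa + g)) = Bf v1 v2 (toQ aa) + Bf v1 v2 (toQ g) := by
        rw [toQ_add, Bf_add]
      have hαx : 0 ≤ Af v1 v2 (toQ (aa + g)) := by rw [hxA]; linarith
      have hβx : 0 ≤ Bf v1 v2 (toQ (aa + g)) := by rw [hxB]; linarith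
      have hxne : toQ (aa + g) ≠ 0 := fun h =>
        hgne (addN_eq_zero (toQ_eq_zero h)).2
      rcases le_total (a * Bf v1 v2 (toQ (aa + g))) (b * Af v1 v2 (toQ (aa + g)))
        with hside | hside
      · -- v1-side : use n1
        have hxn1S : (aa + g) + n1 ∈ S := by
          have h' := hn1T g hgG
          rwa [add_right_comm] at h'
        rw [hSF] at hxn1S
        obtain ⟨i, hi⟩ := hxn1S
        rw [hFeq] at hi
        obtain ⟨k, hk⟩ := side hD ht0 ht1 ha.le hb hab.le htab.le hQ1t hrep
          hxne hαx hβx (by linarith) hk11 hk1 hi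
        apply hgS
        rw [hSF]
        exact ⟨k, by rw [hFeq]; exact hk⟩
      · -- v2-side : use n2
        have hxn2S : (aa + g) + n2 ∈ S := by
          have h' := hn2T g hgG
          rwa [add_right_comm] at h'
        rw [hSF] at hxn2S
        obtain ⟨i, hi⟩ := hxn2S
        rw [hFeq'] at hi
        have hαx' : 0 ≤ Af v2 v1 (toQ (aa + g)) := by rw [Af_swap]; exact hβx
        have hβx' : 0 ≤ Bf v2 v1 (toQ (aa + g)) := by rw [Bf_swap]; exact hαx
        have hside' : 0 ≤ a * Af v2 v1 (toQ (aa + g)) -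
            b * Bf v2 v1 (toQ (aa + g)) := by
          rw [Af_swap (v1 := v1) (v2 := v2), Bf_swap (v1 := v1) (v2 := v2)]
          linarith
        obtain ⟨k, hk⟩ := side hD' ht0 ht1 hb.le ha (by linarith) htab' hQ1t
          hrep' hxne hαx' hβx' hside' hk21 hk2 hi
        apply hgS
        rw [hSF]
        exact ⟨k, by rw [hFeq']; exact hk⟩
    rcases lt_or_gt_of_ne ht0ne1 with hlt | hgt
    · exact main (P 1) (P 2) t0 ht0pos hlt hP1t hP2ne hrange hnmA hnmB hnmC
        hnmD (hPcone 2)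
    · have hP2t : P 2 = t0⁻¹ • P 1 := by
        rw [hP1t, smul_smul, inv_mul_cancel₀ ht0nz, one_smul]
      have hpairPQ : ({P 2, P 1} : Set (Fin 2 → ℚ)) = {P 1, P 2} :=
        Set.pair_comm _ _
      have hrange' : Set.range P = ({v1, P 2, P 1, v2} : Set (Fin 2 → ℚ)) := by
        rw [hrange]
        ext z
        simp only [Set.mem_insert_iff, Set.mem_singleton_iff]
        tauto
      exact main (P 2) (P 1) t0⁻¹ (inv_pos.2 ht0pos) (inv_lt_one_of_one_lt₀ hgt) hP2t
        hP1ne hrange' hnmB hnmA (hpairPQ ▸ hnmC) (hpairPQ ▸ hnmD) (hPcone 1)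
end

section
/- Let F be a convex quadrilateral with vertices P_1,…,P_4 ∈ ℚ^2_{≥0} such that P_1 lies on the extremal ray τ_1, P_4 lies on the extremal ray τ_2, and O, P_2, P_3 are collinear on a line through the origin. Let 𝒞_1 be the cone delimited by τ_1 and the ray OP_2, and 𝒞_2 the cone delimited by OP_2 and τ_2. Then 𝒞 = 𝒞_1 ∪ 𝒞_2 and the convex polygonal semigroup 𝔓 of F equals 𝔓_1 ∪ 𝔓_2, where 𝔓_1, 𝔓_2 are the convex polygonal semigroups of the triangles with vertex sets {P_1,P_2,P_3} and {P_2,P_3,P_4} respectively. -/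
open Set
open scoped Pointwise

abbrev V2 := Fin 2 → ℚ


lemma mem_coneQ_two {G : Set V2} {A B : V2} (hA : A ∈ G) (hB : B ∈ G)
    {a b : ℚ} (ha : 0 ≤ a) (hb : 0 ≤ b) : a • A + b • B ∈ coneQ G := by
  refine ⟨2, ![a, b], ![A, B], ?_, ?_, ?_⟩
  · intro i; fin_cases i <;> simpa
  · intro i; fin_cases i <;> simpa
  · simp [Fin.sum_univ_two]

lemma mem_coneQ_one {G : Set V2} {A : V2} (hA : A ∈ G) {a : ℚ} (ha : 0 ≤ a) :
    a • A ∈ coneQ G := by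
  refine ⟨1, ![a], ![A], ?_, ?_, ?_⟩
  · intro i; fin_cases i <;> simpa
  · intro i; fin_cases i <;> simpa
  · simp

lemma coneQ_subset_of {G M : Set V2} (h0 : (0:V2) ∈ M)
    (hadd : ∀ x ∈ M, ∀ y ∈ M, x + y ∈ M)
    (hsmul : ∀ (q : ℚ), 0 ≤ q → ∀ x ∈ M, q • x ∈ M)
    (hG : G ⊆ M) : coneQ G ⊆ M := by
  rintro x ⟨n, q, f, hq, hf, rfl⟩
  exact Finset.sum_induction _ _ (fun a b ha hb => hadd a ha b hb) h0
    (fun i _ => hsmul (q i) (hq i) (f i) (hG (hf i)))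

lemma coneQ_mono {G H : Set V2} (h : G ⊆ H) : coneQ G ⊆ coneQ H := by
  rintro x ⟨n,q,f,hq,hf,rfl⟩; exact ⟨n,q,f,hq,fun i => h (hf i), rfl⟩

lemma coneQ_pair_eq (A B : V2) :
    coneQ {A, B} = {x | ∃ a b : ℚ, 0 ≤ a ∧ 0 ≤ b ∧ x = a • A + b • B} := by
  apply subset_antisymm
  · apply coneQ_subset_of
    · exact ⟨0, 0, le_refl _, le_refl _, by simp⟩
    · rintro x ⟨a1,b1,ha1,hb1,rfl⟩ y ⟨a2,b2,ha2,hb2,rfl⟩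
      exact ⟨a1+a2, b1+b2, by positivity, by positivity, by module⟩
    · rintro q hq x ⟨a,b,ha,hb,rfl⟩
      exact ⟨q*a, q*b, mul_nonneg hq ha, mul_nonneg hq hb, by module⟩
    · rintro x (rfl | rfl)
      exacts [⟨1,0,zero_le_one,le_refl _, by module⟩, ⟨0,1,le_refl _,zero_le_one, by module⟩]
  · rintro x ⟨a,b,ha,hb,rfl⟩; exact mem_coneQ_two (by simp) (by simp) ha hb

lemma polySG_union (S T : Set V2) : polySG (S ∪ T) = polySG S ∪ polySG T := by
  ext x
  constructor
  · rintro ⟨i, h⟩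
    rw [smul_set_union] at h
    rcases h with h | h
    exacts [Or.inl ⟨i, h⟩, Or.inr ⟨i, h⟩]
  · rintro (⟨i, h⟩ | ⟨i, h⟩)
    · exact ⟨i, by rw [smul_set_union]; exact Or.inl h⟩
    · exact ⟨i, by rw [smul_set_union]; exact Or.inr h⟩

/-- middle multiple lies on segment of outer multiples -/
lemma smul_mem_segment_smul {r1 r2 r3 : ℚ} (h12 : r1 ≤ r2) (h23 : r2 ≤ r3) (c : V2) :
    r2 • c ∈ segment ℚ (r1 • c) (r3 • c) := by
  rcases eq_or_lt_of_le (h12.trans h23) with h | h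
  · have : r2 = r1 := le_antisymm (h ▸ h23) h12
    rw [this]; exact left_mem_segment ℚ _ _
  · have hne : r3 - r1 ≠ 0 := by linarith
    refine ⟨(r3 - r2)/(r3 - r1), (r2 - r1)/(r3 - r1), ?_, ?_, ?_, ?_⟩
    · apply div_nonneg <;> linarith
    · apply div_nonneg <;> linarith
    · field_simp; ring
    · rw [smul_smul, smul_smul, ← add_smul]
      congr 1
      field_simp
      ring

lemma mem_hull_three {S : Set V2} {X u w : V2} (hX : X ∈ S) (hu : u ∈ S) (hw : w ∈ S)
    {α β γ : ℚ} (hα : 0 ≤ α) (hβ : 0 ≤ β) (hγ : 0 ≤ γ) (hsum : α + β + γ = 1) :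
    α • X + β • u + γ • w ∈ convexHull ℚ S := by
  have := Finset.centerMass_mem_convexHull (Finset.univ : Finset (Fin 3))
    (w := ![α, β, γ]) (z := ![X, u, w]) (s := S) ?_ ?_ ?_
  · have hc : Finset.univ.centerMass ![α, β, γ] ![X, u, w] = α • X + β • u + γ • w := by
      rw [Finset.centerMass]
      simp [Fin.sum_univ_three, hsum]
    rwa [hc] at this
  · intro i _; fin_cases i <;> simpa
  · simp [Fin.sum_univ_three]; linarith
  · intro i _; fin_cases i <;> simpa

lemma mem_hull_tri {S : Set V2} {X u : V2} {t : ℚ} (hX : X ∈ S) (hu : u ∈ S)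
    (hv : t • u ∈ S) (ht : t ≠ 1) {α δ : ℚ} (hα0 : 0 ≤ α) (hα1 : α ≤ 1)
    (hlo : min 1 t * (1 - α) ≤ δ) (hhi : δ ≤ max 1 t * (1 - α)) :
    α • X + δ • u ∈ convexHull ℚ S := by
  set γ := (δ - (1 - α)) / (t - 1) with hγdef
  set β := (1 - α) - γ with hβdef
  have htne : t - 1 ≠ 0 := sub_ne_zero.mpr ht
  have hβγ : β + γ * t = δ := by
    rw [hβdef, hγdef]; field_simp; ring
  have key : α • X + δ • u = α • X + β • u + γ • (t • u) := by
    rw [← hβγ]; module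
  rw [key]
  have h1α : 0 ≤ 1 - α := by linarith
  rcases lt_or_gt_of_ne ht with hlt | hgt
  · -- t < 1 : min = t, max = 1
    have hmin : min 1 t = t := min_eq_right hlt.le
    have hmax : max 1 t = 1 := max_eq_left hlt.le
    rw [hmin] at hlo; rw [hmax] at hhi
    have hγ0 : 0 ≤ γ := by
      rw [hγdef]; exact div_nonneg_iff.mpr (Or.inr ⟨by linarith, by linarith⟩)
    have hβ0 : 0 ≤ β := by
      rw [hβdef, hγdef]
      rw [sub_nonneg, div_le_iff_of_neg (by linarith : t - 1 < 0)]
      nlinarith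
    exact mem_hull_three hX hu hv hα0 hβ0 hγ0 (by rw [hβdef]; ring)
  · have hmin : min 1 t = 1 := min_eq_left hgt.le
    have hmax : max 1 t = t := max_eq_right hgt.le
    rw [hmin] at hlo; rw [hmax] at hhi
    have hγ0 : 0 ≤ γ := by
      rw [hγdef]; apply div_nonneg <;> linarith
    have hβ0 : 0 ≤ β := by
      rw [hβdef, hγdef, sub_nonneg, div_le_iff₀ (by linarith : 0 < t - 1)]
      nlinarith
    exact mem_hull_three hX hu hv hα0 hβ0 hγ0 (by rw [hβdef]; ring)

lemma exists_weights {P : Fin 4 → V2} {y : V2} (hy : y ∈ convexHull ℚ (range P)) :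
    ∃ c : Fin 4 → ℚ, (∀ j, 0 ≤ c j) ∧ (∑ j, c j) = 1 ∧ y = ∑ j, c j • P j := by
  rw [convexHull_range_eq_exists_affineCombination] at hy
  obtain ⟨s, w, hw0, hw1, hy⟩ := hy
  classical
  refine ⟨fun j => if j ∈ s then w j else 0, fun j => ?_, ?_, ?_⟩
  · by_cases h : j ∈ s
    · simpa [h] using hw0 j h
    · simp [h]
  · rw [Finset.sum_ite_mem, Finset.univ_inter, hw1]
  · rw [← hy, s.affineCombination_eq_linear_combination _ _ hw1]
    rw [show (∑ j, (if j ∈ s then w j else 0) • P j) = ∑ j, (if j ∈ s then w j • P j else 0) by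
      apply Finset.sum_congr rfl; intro j _; split <;> simp]
    rw [Finset.sum_ite_mem, Finset.univ_inter]

lemma rat_mem_coneQ_polySG {F : Set V2} {y : V2} (hy : y ∈ F) (hpos : ∀ i, 0 ≤ y i) :
    y ∈ coneQ (toQ '' polySG F) := by
  set d : ℕ := (y 0).den * (y 1).den with hd
  have hd0 : (0:ℚ) < d := by positivity
  set x : Fin 2 → ℕ := ![(y 0).num.toNat * (y 1).den, (y 1).num.toNat * (y 0).den] with hx
  have hnum0 : ((y 0).num.toNat : ℚ) = ((y 0).num : ℚ) := by
    exact_mod_cast Int.toNat_of_nonneg (Rat.num_nonneg.mpr (hpos 0))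
  have hnum1 : ((y 1).num.toNat : ℚ) = ((y 1).num : ℚ) := by
    exact_mod_cast Int.toNat_of_nonneg (Rat.num_nonneg.mpr (hpos 1))
  have hden0 : ((y 0).den : ℚ) ≠ 0 := by exact_mod_cast (y 0).den_ne_zero
  have hden1 : ((y 1).den : ℚ) ≠ 0 := by exact_mod_cast (y 1).den_ne_zero
  have c0 := Rat.num_div_den (y 0)
  have c1 := Rat.num_div_den (y 1)
  rw [div_eq_iff hden0] at c0
  rw [div_eq_iff hden1] at c1
  have h0 : toQ x 0 = ((d : ℚ) • y) 0 := by
    simp only [toQ, hx, hd, Matrix.cons_val_zero, Pi.smul_apply, smul_eq_mul, Nat.cast_mul]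
    rw [hnum0]
    linear_combination ((y 1).den : ℚ) * c0
  have h1 : toQ x 1 = ((d : ℚ) • y) 1 := by
    simp only [toQ, hx, hd, Matrix.cons_val_one, Matrix.head_cons, Matrix.cons_val_zero, Pi.smul_apply,
      smul_eq_mul, Nat.cast_mul]
    rw [hnum1]
    linear_combination ((y 0).den : ℚ) * c1
  have htoQ : toQ x = (d : ℚ) • y := by
    funext i
    fin_cases i
    exacts [h0, h1]
  have hxmem : x ∈ polySG F := ⟨d, by rw [htoQ]; exact smul_mem_smul_set hy⟩
  have : y = (d : ℚ)⁻¹ • toQ x := by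
    rw [htoQ, smul_smul, inv_mul_cancel₀ (ne_of_gt hd0), one_smul]
  rw [this]
  refine ⟨1, ![(d:ℚ)⁻¹], ![toQ x], ?_, ?_, by simp⟩
  · intro i; fin_cases i; simp only [Matrix.cons_val_zero]; exact inv_nonneg.mpr hd0.le
  · intro i; fin_cases i; exact ⟨x, hxmem, rfl⟩

set_option maxHeartbeats 1600000 in
/-- With `F` a convex quadrilateral as above whose diagonal
`P_2 P_3` passes through the origin, the cone `𝒞` splits as `𝒞_1 ∪ 𝒞_2` along the
ray `O P_2`, and `𝔓 = 𝔓_1 ∪ 𝔓_2` where `𝔓_1, 𝔓_2` are the semigroups of the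
triangles `{P_1,P_2,P_3}` and `{P_2,P_3,P_4}`. -/
theorem stmt13 (P : Fin 4 → (Fin 2 → ℚ)) (hpos : ∀ j i, 0 ≤ P j i)
    (hvert : ∀ j, P j ∉ convexHull ℚ (P '' {k | k ≠ j}))
    (p1 p4 : Fin 2 → ℕ) (h1 : toQ p1 = P 0) (h4 : toQ p4 = P 3)
    (hP2 : P 1 ≠ 0) (hP3 : P 2 ≠ 0)
    (hcol : Collinear ℚ {0, P 1, P 2})
    (hsimp : Simplicial (polySG (convexHull ℚ (Set.range P))) p1 p4) :
    {x : Fin 2 → ℕ | toQ x ∈ coneQ (convexHull ℚ (Set.range P))} =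
        {x : Fin 2 → ℕ | toQ x ∈ coneQ {toQ p1, P 1}} ∪
          {x : Fin 2 → ℕ | toQ x ∈ coneQ {P 1, toQ p4}} ∧
      polySG (convexHull ℚ (Set.range P)) =
        polySG (convexHull ℚ {P 0, P 1, P 2}) ∪
          polySG (convexHull ℚ {P 1, P 2, P 3}) := by
  classical
  -- notation
  have hAB : coneQ (toQ '' polySG (convexHull ℚ (Set.range P))) = coneQ {P 0, P 3} := by
    rw [hsimp.2.2.2, h1, h4]
  -- every vertex is in the cone generated by P 0 and P 3
  have hrep : ∀ j, ∃ a b : ℚ, 0 ≤ a ∧ 0 ≤ b ∧ P j = a • P 0 + b • P 3 := by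
    intro j
    have hmem : P j ∈ coneQ {P 0, P 3} := by
      rw [← hAB]
      exact rat_mem_coneQ_polySG (subset_convexHull ℚ _ ⟨j, rfl⟩) (hpos j)
    rwa [coneQ_pair_eq] at hmem
  have himg : ∀ (j k : Fin 4), j ≠ k → P j ∈ convexHull ℚ (P '' {m | m ≠ k}) :=
    fun j k h => subset_convexHull ℚ _ (Set.mem_image_of_mem P h)
  -- no three vertices are collinear
  have hnc : ∀ (j k l : Fin 4), j ≠ k → j ≠ l → k ≠ l →
      ¬ Collinear ℚ ({P j, P k, P l} : Set V2) := by
    intro j k l hjk hjl hkl hc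
    rcases hc.wbtw_or_wbtw_or_wbtw with h | h | h
    · exact hvert k ((convex_convexHull ℚ _).segment_subset
        (himg j k hjk) (himg l k hkl.symm) h.mem_segment)
    · exact hvert l ((convex_convexHull ℚ _).segment_subset
        (himg k l hkl) (himg j l hjl) h.mem_segment)
    · exact hvert j ((convex_convexHull ℚ _).segment_subset
        (himg l j hjl.symm) (himg k j hjk.symm) h.mem_segment)
  -- P 2 = t • P 1
  obtain ⟨t, ht2⟩ : ∃ t : ℚ, P 2 = t • P 1 := by
    rw [collinear_iff_of_mem (show (0:V2) ∈ {0, P 1, P 2} by simp)] at hcol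
    obtain ⟨d, hd⟩ := hcol
    obtain ⟨r1, hr1⟩ := hd (P 1) (by simp)
    obtain ⟨r2, hr2⟩ := hd (P 2) (by simp)
    simp only [vadd_eq_add, add_zero] at hr1 hr2
    have hr1ne : r1 ≠ 0 := by
      rintro rfl; exact hP2 (by rw [hr1, zero_smul])
    exact ⟨r2 / r1, by rw [hr2, hr1, smul_smul, div_mul_cancel₀ _ hr1ne]⟩
  have ht1 : t ≠ 1 := by
    rintro rfl
    rw [one_smul] at ht2
    exact hnc 1 2 3 (by decide) (by decide) (by decide)
      (by rw [ht2, Set.insert_idem]; exact collinear_pair ℚ _ _)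
  obtain ⟨a, b, ha0, hb0, hP1rep⟩ := hrep 1
  -- a > 0 and b > 0
  have hB3 : P 3 = toQ p4 := h4.symm
  have ha : 0 < a := by
    rcases ha0.lt_or_eq with h | h
    · exact h
    · exfalso
      rw [← h, zero_smul, zero_add] at hP1rep
      apply hnc 1 2 3 (by decide) (by decide) (by decide)
      rw [collinear_iff_of_mem (show P 3 ∈ ({P 1, P 2, P 3} : Set V2) by simp)]
      refine ⟨P 3, ?_⟩
      rintro p (rfl | rfl | rfl)
      · exact ⟨b - 1, by rw [hP1rep, vadd_eq_add]; module⟩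
      · exact ⟨t * b - 1, by rw [ht2, hP1rep, vadd_eq_add]; module⟩
      · exact ⟨0, by simp⟩
  have hb : 0 < b := by
    rcases hb0.lt_or_eq with h | h
    · exact h
    · exfalso
      rw [← h, zero_smul, add_zero] at hP1rep
      apply hnc 0 1 2 (by decide) (by decide) (by decide)
      rw [collinear_iff_of_mem (show P 0 ∈ ({P 0, P 1, P 2} : Set V2) by simp)]
      refine ⟨P 0, ?_⟩
      rintro p (rfl | rfl | rfl)
      · exact ⟨0, by simp⟩
      · exact ⟨a - 1, by rw [hP1rep, vadd_eq_add]; module⟩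
      · exact ⟨t * a - 1, by rw [ht2, hP1rep, vadd_eq_add]; module⟩
  have hane : a ≠ 0 := ne_of_gt ha
  have hbne : b ≠ 0 := ne_of_gt hb
  have hab : 0 < a + b := by linarith
  -- the crossing point w of [P0,P3] with the ray of P1
  have hwmem : ∀ (j : Fin 4), j ≠ 0 → j ≠ 3 →
      ((a + b)⁻¹ • P 1) ∈ convexHull ℚ (P '' {k | k ≠ j}) := by
    intro j hj0 hj3
    have hseg : (a + b)⁻¹ • P 1 ∈ segment ℚ (P 0) (P 3) := by
      refine ⟨a / (a + b), b / (a + b), by positivity, by positivity, by field_simp, ?_⟩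
      rw [hP1rep]
      match_scalars <;> field_simp
    exact (convex_convexHull ℚ _).segment_subset
      (himg 0 j (Ne.symm hj0)) (himg 3 j (Ne.symm hj3)) hseg
  -- bounds:  min 1 t * (a+b) ≤ 1 ≤ max 1 t * (a+b)
  have hs1 : min 1 t * (a + b) ≤ 1 := by
    by_contra hcon
    push_neg at hcon
    have hsm : (a + b)⁻¹ < min 1 t := by
      have h' : 1 * (a+b)⁻¹ < min 1 t * (a + b) * (a+b)⁻¹ :=
        mul_lt_mul_of_pos_right hcon (by positivity)
      rwa [one_mul, mul_assoc, mul_inv_cancel₀ (ne_of_gt hab), mul_one] at h'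
    rcases le_or_gt t 1 with hle | hlt
    · -- min = t ≤ 1 :  P 2 = t • P 1 between w and P 1
      have hmin : min 1 t = t := min_eq_right hle
      rw [hmin] at hsm
      apply hvert 2
      have : P 2 ∈ segment ℚ ((a+b)⁻¹ • P 1) ((1:ℚ) • P 1) := by
        rw [ht2]; exact smul_mem_segment_smul hsm.le hle _
      rw [one_smul] at this
      exact (convex_convexHull ℚ _).segment_subset (hwmem 2 (by decide) (by decide))
        (himg 1 2 (by decide)) this
    · -- min = 1 < t : P 1 between w and P 2
      have hmin : min 1 t = 1 := min_eq_left hlt.le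
      rw [hmin] at hsm
      apply hvert 1
      have : (1:ℚ) • P 1 ∈ segment ℚ ((a+b)⁻¹ • P 1) (t • P 1) :=
        smul_mem_segment_smul hsm.le hlt.le _
      rw [one_smul] at this
      rw [← ht2] at this
      exact (convex_convexHull ℚ _).segment_subset (hwmem 1 (by decide) (by decide))
        (himg 2 1 (by decide)) this
  have hs2 : 1 ≤ max 1 t * (a + b) := by
    by_contra hcon
    push_neg at hcon
    have hsm : max 1 t < (a + b)⁻¹ := by
      have h' : max 1 t * (a + b) * (a+b)⁻¹ < 1 * (a+b)⁻¹ :=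
        mul_lt_mul_of_pos_right hcon (by positivity)
      rwa [one_mul, mul_assoc, mul_inv_cancel₀ (ne_of_gt hab), mul_one] at h'
    rcases le_or_gt t 1 with hle | hlt
    · -- max = 1 : P 1 between P 2 and w
      have hmax : max 1 t = 1 := max_eq_left hle
      rw [hmax] at hsm
      apply hvert 1
      have : (1:ℚ) • P 1 ∈ segment ℚ (t • P 1) ((a+b)⁻¹ • P 1) :=
        smul_mem_segment_smul hle hsm.le _
      rw [one_smul, ← ht2] at this
      exact (convex_convexHull ℚ _).segment_subset
        (himg 2 1 (by decide)) (hwmem 1 (by decide) (by decide)) this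
    · -- max = t : P 2 between P 1 and w
      have hmax : max 1 t = t := max_eq_right hlt.le
      rw [hmax] at hsm
      apply hvert 2
      have : t • P 1 ∈ segment ℚ ((1:ℚ) • P 1) ((a+b)⁻¹ • P 1) :=
        smul_mem_segment_smul hlt.le hsm.le _
      rw [one_smul, ← ht2] at this
      exact (convex_convexHull ℚ _).segment_subset
        (himg 1 2 (by decide)) (hwmem 2 (by decide) (by decide)) this
  -- closure properties of the big cone
  have hMadd : ∀ x ∈ coneQ {P 0, P 3}, ∀ y ∈ coneQ {P 0, P 3}, x + y ∈ coneQ {P 0, P 3} := by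
    simp only [coneQ_pair_eq, Set.mem_setOf_eq]
    rintro x ⟨a1,b1,ha1,hb1,rfl⟩ y ⟨a2,b2,ha2,hb2,rfl⟩
    exact ⟨a1+a2, b1+b2, by positivity, by positivity, by module⟩
  have hMsmul : ∀ (q : ℚ), 0 ≤ q → ∀ x ∈ coneQ {P 0, P 3}, q • x ∈ coneQ {P 0, P 3} := by
    simp only [coneQ_pair_eq, Set.mem_setOf_eq]
    rintro q hq x ⟨a1,b1,ha1,hb1,rfl⟩
    exact ⟨q*a1, q*b1, by positivity, by positivity, by module⟩
  have hhullcone : convexHull ℚ (range P) ⊆ coneQ {P 0, P 3} := by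
    apply convexHull_min
    · rintro x ⟨j, rfl⟩
      rw [coneQ_pair_eq]; exact hrep j
    · intro x hx y hy s r hs hr hsr
      exact hMadd _ (hMsmul s hs _ hx) _ (hMsmul r hr _ hy)
  have hconehull : coneQ (convexHull ℚ (range P)) ⊆ coneQ {P 0, P 3} :=
    coneQ_subset_of (by rw [coneQ_pair_eq]; exact ⟨0, 0, le_refl _, le_refl _, by simp⟩)
      hMadd hMsmul hhullcone
  -- cone splits along the ray of P 1
  have hconeEq : coneQ (convexHull ℚ (range P)) = coneQ {P 0, P 1} ∪ coneQ {P 1, P 3} := by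
    apply subset_antisymm
    · intro x hx
      have hx' := hconehull hx
      rw [coneQ_pair_eq] at hx'
      obtain ⟨q1, q2, hq1, hq2, rfl⟩ := hx'
      rcases le_or_gt (q2 * a) (q1 * b) with hc | hc
      · left
        have hkey : q1 • P 0 + q2 • P 3 = (q1 - q2*a/b) • P 0 + (q2/b) • P 1 := by
          rw [hP1rep]; match_scalars <;> field_simp <;> ring
        rw [hkey]
        exact mem_coneQ_two (by simp) (by simp)
          (by rw [sub_nonneg, div_le_iff₀ hb]; linarith) (by positivity)
      · right
        have hkey : q1 • P 0 + q2 • P 3 = (q1/a) • P 1 + (q2 - q1*b/a) • P 3 := by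
          rw [hP1rep]; match_scalars <;> field_simp <;> ring
        rw [hkey]
        exact mem_coneQ_two (by simp) (by simp) (by positivity)
          (by rw [sub_nonneg, div_le_iff₀ ha]; linarith)
    · apply union_subset
      · apply coneQ_mono
        rintro x (rfl | rfl)
        exacts [subset_convexHull ℚ _ ⟨0, rfl⟩, subset_convexHull ℚ _ ⟨1, rfl⟩]
      · apply coneQ_mono
        rintro x (rfl | rfl)
        exacts [subset_convexHull ℚ _ ⟨1, rfl⟩, subset_convexHull ℚ _ ⟨3, rfl⟩]
  -- the quadrilateral splits into the two triangles
  have hm1 : min 1 t ≤ 1 := min_le_left _ _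
  have hmt : min 1 t ≤ t := min_le_right _ _
  have hM1 : 1 ≤ max 1 t := le_max_left _ _
  have hMt : t ≤ max 1 t := le_max_right _ _
  have hFset : convexHull ℚ (range P) =
      convexHull ℚ {P 0, P 1, P 2} ∪ convexHull ℚ {P 1, P 2, P 3} := by
    apply subset_antisymm
    · intro y hy
      obtain ⟨c, hc0, hcsum, hcrep⟩ := exists_weights hy
      rw [Fin.sum_univ_four] at hcrep hcsum
      have h0 := hc0 0; have h1' := hc0 1; have h2' := hc0 2; have h3' := hc0 3
      rcases le_or_gt (c 3 * a) (c 0 * b) with hcase | hcase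
      · left
        have hkey : y = (c 0 - c 3 * a / b) • P 0 + (c 1 + c 2 * t + c 3 / b) • P 1 := by
          rw [hcrep, ht2, hP1rep]; match_scalars <;> field_simp <;> ring
        rw [hkey]
        refine mem_hull_tri (by simp) (by simp)
          (by rw [← ht2]; simp) ht1 ?_ ?_ ?_ ?_
        · rw [sub_nonneg, div_le_iff₀ hb]; linarith
        · have hdiv : 0 ≤ c 3 * a / b := by positivity
          linarith
        · have e1 : min 1 t * c 1 ≤ c 1 := mul_le_of_le_one_left h1' hm1
          have e2 : min 1 t * c 2 ≤ c 2 * t := by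
            nlinarith [mul_le_mul_of_nonneg_left hmt h2']
          have hkey3 : c 3 / b - min 1 t * (c 3 + c 3 * a / b) =
              c 3 * (1 - min 1 t * (a+b)) / b := by field_simp; ring
          have hpos3 : 0 ≤ c 3 * (1 - min 1 t * (a+b)) / b :=
            div_nonneg (mul_nonneg h3' (by linarith)) hb.le
          nlinarith [hkey3, hpos3]
        · have e1 : c 1 ≤ max 1 t * c 1 := le_mul_of_one_le_left h1' hM1
          have e2 : c 2 * t ≤ max 1 t * c 2 := by
            nlinarith [mul_le_mul_of_nonneg_left hMt h2']
          have hkey3 : max 1 t * (c 3 + c 3 * a / b) - c 3 / b =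
              c 3 * (max 1 t * (a+b) - 1) / b := by field_simp; ring
          have hpos3 : 0 ≤ c 3 * (max 1 t * (a+b) - 1) / b :=
            div_nonneg (mul_nonneg h3' (by linarith)) hb.le
          nlinarith [hkey3, hpos3]
      · right
        have hkey : y = (c 3 - c 0 * b / a) • P 3 + (c 1 + c 2 * t + c 0 / a) • P 1 := by
          rw [hcrep, ht2, hP1rep]; match_scalars <;> field_simp <;> ring
        rw [hkey]
        refine mem_hull_tri (by simp) (by simp)
          (by rw [← ht2]; simp) ht1 ?_ ?_ ?_ ?_
        · rw [sub_nonneg, div_le_iff₀ ha]; linarith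
        · have hdiv : 0 ≤ c 0 * b / a := by positivity
          linarith
        · have e1 : min 1 t * c 1 ≤ c 1 := mul_le_of_le_one_left h1' hm1
          have e2 : min 1 t * c 2 ≤ c 2 * t := by
            nlinarith [mul_le_mul_of_nonneg_left hmt h2']
          have hkey3 : c 0 / a - min 1 t * (c 0 + c 0 * b / a) =
              c 0 * (1 - min 1 t * (a+b)) / a := by field_simp
          have hpos3 : 0 ≤ c 0 * (1 - min 1 t * (a+b)) / a :=
            div_nonneg (mul_nonneg h0 (by linarith)) ha.le
          nlinarith [hkey3, hpos3]
        · have e1 : c 1 ≤ max 1 t * c 1 := le_mul_of_one_le_left h1' hM1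
          have e2 : c 2 * t ≤ max 1 t * c 2 := by
            nlinarith [mul_le_mul_of_nonneg_left hMt h2']
          have hkey3 : max 1 t * (c 0 + c 0 * b / a) - c 0 / a =
              c 0 * (max 1 t * (a+b) - 1) / a := by field_simp
          have hpos3 : 0 ≤ c 0 * (max 1 t * (a+b) - 1) / a :=
            div_nonneg (mul_nonneg h0 (by linarith)) ha.le
          nlinarith [hkey3, hpos3]
    · apply union_subset
      · apply convexHull_mono
        rintro x (rfl | rfl | rfl)
        exacts [⟨0, rfl⟩, ⟨1, rfl⟩, ⟨2, rfl⟩]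
      · apply convexHull_mono
        rintro x (rfl | rfl | rfl)
        exacts [⟨1, rfl⟩, ⟨2, rfl⟩, ⟨3, rfl⟩]
  constructor
  · rw [h1, h4, hconeEq]
    ext x
    simp [Set.mem_union]
  · rw [hFset, polySG_union]
end

section
/- Let 𝔓 be a simplicial affine convex polygonal semigroup whose defining polygon F meets the extremal ray τ_1 in a single vertex P_1. Let j be the least positive integer such that j·[P_1,P_t] ∩ (j+1)·[P_1,P_2] ≠ ∅ (where P_t, P_2 are the vertices adjacent to P_1), set {V_1} = j·[P_1,P_t] ∩ (j+1)·[P_1,P_2], and define ℬ_1 = {D + λ n_1 : D ∈ [jP_1, V_1], λ ∈ ℚ_{≥0}} ∩ 𝒞, where n_1 is the minimal-norm element of 𝔓 on τ_1. Then for every P ∈ ℬ_1 \ 𝔓 one has P + n_1 ∉ 𝔓, and consequently 𝔓 ∩ ℬ_1 = 𝔓̄ ∩ ℬ_1. -/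
open Set
open scoped Pointwise

/-- The intersection `h·[P1,Pt] ∩ (h+1)·[P1,P2]` of consecutive dilated sides. -/
def crossSet (P1 Pt P2 : Fin 2 → ℚ) (h : ℕ) : Set (Fin 2 → ℚ) :=
  segment ℚ ((h : ℚ) • P1) ((h : ℚ) • Pt) ∩
    segment ℚ (((h : ℚ) + 1) • P1) (((h : ℚ) + 1) • P2)

/-- The region `ℬ = {D + λ·n : D ∈ [j·P1, V], λ ∈ ℚ_{≥0}} ∩ C`. -/
def stripB (P1 V : Fin 2 → ℚ) (j : ℕ) (n : Fin 2 → ℕ) (C : Set (Fin 2 → ℕ)) :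
    Set (Fin 2 → ℕ) :=
  {x | (∃ D ∈ segment ℚ ((j : ℚ) • P1) V, ∃ l : ℚ, 0 ≤ l ∧ toQ x = D + l • toQ n) ∧
    x ∈ C}

/-- A (affine) line in `ℚ²`. -/
def IsLine (ν : Set (Fin 2 → ℚ)) : Prop :=
  ∃ p d : Fin 2 → ℚ, d ≠ 0 ∧ ν = {y | ∃ s : ℚ, y = p + s • d}

/-- The corner region `Υ_i = ConvexHull({O, j·P1, V, ν ∩ τ}) ∩ ℕ²`. -/
def Ups (j : ℕ) (P1 V W : Fin 2 → ℚ) : Set (Fin 2 → ℕ) :=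
  {x | toQ x ∈ convexHull ℚ {0, (j : ℚ) • P1, V, W}}

/-- The translated-cone region `Υ = (Q + L_{ℚ≥}(F)) ∩ ℕ²`. -/
def UpsMain (Qpt : Fin 2 → ℚ) (F : Set (Fin 2 → ℚ)) : Set (Fin 2 → ℕ) :=
  {x | ∃ y ∈ coneQ F, toQ x = Qpt + y}

section Helpers

lemma toQ_add (x y : Fin 2 → ℕ) : toQ (x + y) = toQ x + toQ y := by
  funext i; simp [toQ]

lemma toQ_eq_zero {x : Fin 2 → ℕ} (h : toQ x = 0) : x = 0 := by
  funext i
  have := congrFun h i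
  simpa [toQ] using this

lemma vec_ne_zero {d : Fin 2 → ℚ} (hd : d ≠ 0) : d 0 ≠ 0 ∨ d 1 ≠ 0 := by
  by_contra h
  push_neg at h
  apply hd
  funext i
  fin_cases i
  · exact h.1
  · exact h.2

lemma det_collinear {d y : Fin 2 → ℚ} (hd : d ≠ 0)
    (h : -(d 1) * y 0 + d 0 * y 1 = 0) : ∃ s : ℚ, y = s • d := by
  rcases vec_ne_zero hd with h0 | h1
  · refine ⟨y 0 / d 0, ?_⟩
    funext i
    fin_cases i
    · simp [Pi.smul_apply]; field_simp
    · simp [Pi.smul_apply]; field_simp; linarith [h]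
  · refine ⟨y 1 / d 1, ?_⟩
    funext i
    fin_cases i
    · simp [Pi.smul_apply]; field_simp
      have : d 0 * y 1 = d 1 * y 0 := by linarith
      nlinarith [this]
    · simp [Pi.smul_apply]; field_simp

lemma combo4 {s : Set (Fin 2 → ℚ)} (hs : Convex ℚ s) {p q r w : Fin 2 → ℚ}
    (hp : p ∈ s) (hq : q ∈ s) (hr : r ∈ s) (hw : w ∈ s)
    {a b c d : ℚ} (ha : 0 ≤ a) (hb : 0 ≤ b) (hc : 0 ≤ c) (hd : 0 ≤ d)
    (hsum : a + b + c + d = 1) : a • p + b • q + c • r + d • w ∈ s := by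
  have := hs.sum_mem (t := Finset.univ) (w := ![a,b,c,d]) (z := ![p,q,r,w])
    (by intro i _; fin_cases i <;> simpa)
    (by simp [Fin.sum_univ_four]; linarith)
    (by intro i _; fin_cases i <;> simpa)
  simpa [Fin.sum_univ_four] using this

lemma conic3 {F : Set (Fin 2 → ℚ)} (hconv : Convex ℚ F) {p q r : Fin 2 → ℚ}
    (hp : p ∈ F) (hq : q ∈ F) (hr : r ∈ F) {a b c N : ℚ}
    (ha : 0 ≤ a) (hb : 0 ≤ b) (hc : 0 ≤ c) (hsum : a + b + c = N) (hN : 0 < N) :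
    a • p + b • q + c • r ∈ N • F := by
  have hmem : (a/N) • p + (b/N) • q + (c/N) • r ∈ F := by
    have := combo4 hconv hp hq hr hp (a := a/N) (b := b/N) (c := c/N) (d := 0)
      (by positivity) (by positivity) (by positivity) le_rfl
      (by field_simp; linarith)
    simpa using this
  have := Set.smul_mem_smul_set (a := N) hmem
  convert this using 1
  funext i
  simp only [Pi.add_apply, Pi.smul_apply, smul_eq_mul]
  field_simp
  try ring

end Helpers

section Halfplane

lemma halfplane {Fs : Set (Fin 2 → ℚ)} (hconv : Convex ℚ Fs)
    {A B C : Fin 2 → ℚ} (hext : IsExtreme ℚ Fs (segment ℚ A B)) (hC : C ∈ Fs)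
    (hAB : A ≠ B) (hNC : ∀ c : ℚ, C - A ≠ c • (B - A)) :
    ∃ ca cb : ℚ, (ca * B 0 + cb * B 1 = ca * A 0 + cb * A 1) ∧
      (ca * A 0 + cb * A 1 < ca * C 0 + cb * C 1) ∧
      ∀ f ∈ Fs, ca * A 0 + cb * A 1 ≤ ca * f 0 + cb * f 1 := by
  classical
  have hd : B - A ≠ 0 := sub_ne_zero.mpr (Ne.symm hAB)
  have hD0 : -((B-A) 1) * (C 0 - A 0) + (B-A) 0 * (C 1 - A 1) ≠ 0 := by
    intro h
    obtain ⟨s, hs⟩ := det_collinear (y := C - A) hd (by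
      simp only [Pi.sub_apply] at h ⊢; linarith)
    exact hNC s hs
  simp only [Pi.sub_apply] at hD0
  obtain ⟨ca, cb, hsign, hcab⟩ :
      ∃ ca cb : ℚ, 0 < ca * (C 0 - A 0) + cb * (C 1 - A 1) ∧
        (ca = -(B 1 - A 1) ∧ cb = B 0 - A 0 ∨ ca = B 1 - A 1 ∧ cb = -(B 0 - A 0)) := by
    rcases lt_or_gt_of_ne hD0 with hneg | hpos
    · exact ⟨B 1 - A 1, -(B 0 - A 0), by nlinarith [hneg], Or.inr ⟨rfl, rfl⟩⟩
    · exact ⟨-(B 1 - A 1), B 0 - A 0, by nlinarith [hpos], Or.inl ⟨rfl, rfl⟩⟩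
  have hABeq : ca * B 0 + cb * B 1 = ca * A 0 + cb * A 1 := by
    rcases hcab with ⟨h1, h2⟩ | ⟨h1, h2⟩ <;> (subst h1; subst h2; ring)
  have hCgt : ca * A 0 + cb * A 1 < ca * C 0 + cb * C 1 := by linarith [hsign]
  refine ⟨ca, cb, hABeq, hCgt, ?_⟩
  have hker : ∀ y : Fin 2 → ℚ, ca * y 0 + cb * y 1 = 0 → ∃ s : ℚ, y = s • (B - A) := by
    intro y hy
    apply det_collinear hd
    simp only [Pi.sub_apply]
    rcases hcab with ⟨h1, h2⟩ | ⟨h1, h2⟩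
    · rw [h1, h2] at hy; linarith
    · rw [h1, h2] at hy; linarith
  intro f hf
  by_contra hlt
  push_neg at hlt
  set M : Fin 2 → ℚ := (1/2 : ℚ) • A + (1/2 : ℚ) • B with hM_def
  have hMseg : M ∈ segment ℚ A B :=
    ⟨1/2, 1/2, by norm_num, by norm_num, by norm_num, rfl⟩
  have hMF : M ∈ Fs := hext.1 hMseg
  have hM0 : M 0 = (1/2) * A 0 + (1/2) * B 0 := by simp [hM_def]
  have hM1 : M 1 = (1/2) * A 1 + (1/2) * B 1 := by simp [hM_def]
  have hden : ca * f 0 + cb * f 1 - (ca * A 0 + cb * A 1) ≠ 0 := by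
    intro h; rw [sub_eq_zero] at h; exact absurd h (ne_of_lt hlt)
  set t : ℚ := ((ca * A 0 + cb * A 1) - (ca * C 0 + cb * C 1)) /
      ((ca * f 0 + cb * f 1) - (ca * A 0 + cb * A 1)) with ht_def
  have ht : 0 < t := div_pos_of_neg_of_neg (by linarith) (by linarith)
  have ht2 : t * ((ca * f 0 + cb * f 1) - (ca * A 0 + cb * A 1))
      = (ca * A 0 + cb * A 1) - (ca * C 0 + cb * C 1) := by
    rw [ht_def]; field_simp
  clear_value t
  obtain ⟨s, hs⟩ := hker (M - C - t • (f - M)) (by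
    simp only [Pi.sub_apply, Pi.smul_apply, smul_eq_mul]
    rw [hM0, hM1]
    linear_combination (-1) * ht2 + ((1+t)/2) * hABeq)
  have hdecomp := fun i => congrFun hs i
  set sp : ℚ := max s 0 with hsp_def
  set sm : ℚ := max (-s) 0 with hsm_def
  have hsp0 : 0 ≤ sp := le_max_right _ _
  have hsm0 : 0 ≤ sm := le_max_right _ _
  have hspm : sp - sm = s := by
    rcases le_or_gt s 0 with h | h
    · simp [hsp_def, hsm_def, max_eq_right h, max_eq_left (by linarith : (0:ℚ) ≤ -s)]
    · simp [hsp_def, hsm_def, max_eq_left h.le, max_eq_right (by linarith : -s ≤ 0)]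
  clear_value sp sm
  have hT : 0 < t + 2*sp + 2*sm := by positivity
  set ε : ℚ := 1 / (1 + (t + 2*sp + 2*sm)) with hε_def
  have hε : 0 < ε := by positivity
  have hεT : ε * (t + 2*sp + 2*sm) < 1 := by
    rw [hε_def, div_mul_eq_mul_div, div_lt_one (by positivity)]
    linarith
  have hε1 : ε ≤ 1 := by
    rw [hε_def, div_le_one (by positivity)]; linarith
  clear_value ε
  set Y : Fin 2 → ℚ := (1-ε) • M + ε • C with hY_def
  set Z : Fin 2 → ℚ := (1 - ε*t - ε*(2*sp) - ε*(2*sm)) • M + (ε*t) • f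
      + (ε*(2*sp)) • B + (ε*(2*sm)) • A with hZ_def
  have hYF : Y ∈ Fs := by
    rw [hY_def]
    have := combo4 hconv hMF hC hMF hMF (a := 1-ε) (b := ε) (c := 0) (d := 0)
      (by linarith) hε.le le_rfl le_rfl (by ring)
    simpa using this
  have hZF : Z ∈ Fs := by
    rw [hZ_def]
    have h1 : 0 ≤ 1 - ε*t - ε*(2*sp) - ε*(2*sm) := by nlinarith [hεT]
    exact combo4 hconv hMF hf (hext.1 (right_mem_segment ℚ A B))
      (hext.1 (left_mem_segment ℚ A B))
      h1 (by positivity) (by positivity) (by positivity) (by ring)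
  have hmid : M = (1/2 : ℚ) • Y + (1/2 : ℚ) • Z := by
    funext i
    have hdec := hdecomp i
    simp only [Pi.sub_apply, Pi.smul_apply, smul_eq_mul] at hdec
    rw [← hspm] at hdec
    rw [hY_def, hZ_def]
    simp only [Pi.add_apply, Pi.smul_apply, smul_eq_mul]
    have hMi : M i = (1/2) * A i + (1/2) * B i := by simp [hM_def]
    rw [hMi] at hdec ⊢
    linear_combination (ε/2) * hdec
  have hYZ : M ∈ openSegment ℚ Y Z :=
    ⟨1/2, 1/2, by norm_num, by norm_num, by norm_num, hmid.symm⟩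
  have hYseg := hext.2 hYF hZF hMseg hYZ
  obtain ⟨a, b, ha, hb, hab, hYab⟩ := hYseg
  have hY0 := congrFun hYab 0
  have hY1 := congrFun hYab 1
  simp only [Pi.add_apply, Pi.smul_apply, smul_eq_mul] at hY0 hY1
  have hYc0 : ca * Y 0 + cb * Y 1 = ca * A 0 + cb * A 1 := by
    rw [← hY0, ← hY1]
    linear_combination b * hABeq + (ca * A 0 + cb * A 1) * hab
  have hYval0 : Y 0 = (1-ε) * M 0 + ε * C 0 := by rw [hY_def]; simp
  have hYval1 : Y 1 = (1-ε) * M 1 + ε * C 1 := by rw [hY_def]; simp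
  rw [hYval0, hYval1, hM0, hM1] at hYc0
  have hfinal : ε * ((ca * C 0 + cb * C 1) - (ca * A 0 + cb * A 1)) = 0 := by
    linear_combination hYc0 - ((1-ε)/2) * hABeq
  have := mul_pos hε (sub_pos.mpr hCgt)
  linarith [hfinal, this]

end Halfplane

section Helpers2

lemma coneQ_two {X Y z : Fin 2 → ℚ} (h : z ∈ coneQ {X, Y}) :
    ∃ a b : ℚ, 0 ≤ a ∧ 0 ≤ b ∧ z = a • X + b • Y := by
  obtain ⟨n, q, f, hq, hf, hz⟩ := h
  subst hz
  induction n with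
  | zero => exact ⟨0, 0, le_rfl, le_rfl, by simp⟩
  | succ n ih =>
    obtain ⟨a, b, ha, hb, hab⟩ := ih (fun i => q i.succ) (fun i => f i.succ)
      (fun i => hq _) (fun i => hf _)
    rw [Fin.sum_univ_succ, hab]
    rcases hf 0 with h0 | h0
    · refine ⟨a + q 0, b, by have := hq 0; linarith, hb, ?_⟩
      rw [h0]; module
    · simp only [Set.mem_singleton_iff] at h0
      refine ⟨a, b + q 0, ha, by have := hq 0; linarith, ?_⟩
      rw [h0]; module

lemma polySG_add {F : Set (Fin 2 → ℚ)} (hconv : Convex ℚ F) (hne : F.Nonempty)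
    {x y : Fin 2 → ℕ} (hx : x ∈ polySG F) (hy : y ∈ polySG F) :
    x + y ∈ polySG F := by
  obtain ⟨i, hi⟩ := hx
  obtain ⟨i', hi'⟩ := hy
  rcases Nat.eq_zero_or_pos i with rfl | hipos
  · rw [Nat.cast_zero, Set.zero_smul_set hne] at hi
    refine ⟨i', ?_⟩
    rw [toQ_add]
    have : toQ x = 0 := by simpa using hi
    simpa [this] using hi'
  rcases Nat.eq_zero_or_pos i' with rfl | hipos'
  · rw [Nat.cast_zero, Set.zero_smul_set hne] at hi'
    refine ⟨i, ?_⟩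
    rw [toQ_add]
    have : toQ y = 0 := by simpa using hi'
    simpa [this] using hi
  obtain ⟨f, hf, hfx⟩ := hi
  obtain ⟨g, hg, hgy⟩ := hi'
  refine ⟨i + i', ?_⟩
  have hN : (0:ℚ) < (i:ℚ) + (i':ℚ) := by positivity
  have hmem : ((i:ℚ)/((i:ℚ)+(i':ℚ))) • f + ((i':ℚ)/((i:ℚ)+(i':ℚ))) • g ∈ F :=
    hconv hf hg (by positivity) (by positivity) (by field_simp)
  have := Set.smul_mem_smul_set (a := (i:ℚ)+(i':ℚ)) hmem
  rw [toQ_add, ← hfx, ← hgy]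
  push_cast
  convert this using 1
  funext k
  simp only [Pi.add_apply, Pi.smul_apply, smul_eq_mul]
  field_simp
  try ring

end Helpers2

set_option maxHeartbeats 1600000 in
/-- Let `F` meet `τ_1` in the single vertex `P_1` with adjacent
vertices `P_t, P_2`, `j` least positive with `j[P_1,P_t] ∩ (j+1)[P_1,P_2] = {V_1}`,
and `ℬ_1 = {D + λ n_1 : D ∈ [jP_1,V_1], λ ∈ ℚ_{≥0}} ∩ 𝒞`. Then every
`P ∈ ℬ_1 \ 𝔓` has `P + n_1 ∉ 𝔓`, and `𝔓 ∩ ℬ_1 = 𝔓̄ ∩ ℬ_1`. -/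
theorem stmt14 (t : ℕ) (P : Fin t → (Fin 2 → ℚ)) (hpos : ∀ j i, 0 ≤ P j i)
    (i1 it i2 : Fin t) (hne : i1 ≠ it ∧ i1 ≠ i2 ∧ it ≠ i2)
    (S : Set (Fin 2 → ℕ)) (hS : S = polySG (convexHull ℚ (Set.range P)))
    (G : Finset (Fin 2 → ℕ)) (hG : minimalGenSet S G)
    (v1 v2 : Fin 2 → ℕ) (hsimp : Simplicial S v1 v2)
    (hP1 : convexHull ℚ (Set.range P) ∩ rayQ (toQ v1) = {P i1})
    (hedge1 : IsExtreme ℚ (convexHull ℚ (Set.range P)) (segment ℚ (P i1) (P it)))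
    (hedge2 : IsExtreme ℚ (convexHull ℚ (Set.range P)) (segment ℚ (P i1) (P i2)))
    (hnp : ¬ ∃ c : ℚ, P it - P i1 = c • (P i2 - P i1))
    (j : ℕ) (hj0 : 0 < j) (hjex : (crossSet (P i1) (P it) (P i2) j).Nonempty)
    (hjle : ∀ j' : ℕ, 0 < j' → (crossSet (P i1) (P it) (P i2) j').Nonempty → j ≤ j')
    (V1 : Fin 2 → ℚ) (hV1 : crossSet (P i1) (P it) (P i2) j = {V1})
    (n1 : Fin 2 → ℕ) (hn1 : IsMinOnRay S (rayN v1) n1) :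
    (∀ x ∈ stripB (P i1) V1 j n1 (coneN S), x ∉ S → x + n1 ∉ S) ∧
      S ∩ stripB (P i1) V1 j n1 (coneN S) =
        sbar S G ∩ stripB (P i1) V1 j n1 (coneN S) := by
  classical
  set Fs : Set (Fin 2 → ℚ) := convexHull ℚ (Set.range P) with hFs_def
  have hconv : Convex ℚ Fs := convex_convexHull ℚ _
  have hPmem : ∀ k, P k ∈ Fs := fun k => subset_convexHull ℚ _ ⟨k, rfl⟩
  have hneF : Fs.Nonempty := ⟨P i1, hPmem i1⟩
  obtain ⟨⟨hn1S, hn1ray⟩, hn1ne, hn1min⟩ := hn1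
  have hjQ : (1:ℚ) ≤ (j:ℚ) := by exact_mod_cast hj0
  -- k0 with toQ n1 = k0 • P i1
  obtain ⟨k0, hk0pos, hk0⟩ : ∃ k0 : ℕ, 0 < k0 ∧ toQ n1 = (k0:ℚ) • P i1 := by
    have hn1S' : n1 ∈ polySG Fs := by rw [← hS]; exact hn1S
    obtain ⟨i, hi⟩ := hn1S'
    have hiz : i ≠ 0 := by
      rintro rfl
      rw [Nat.cast_zero, Set.zero_smul_set hneF] at hi
      exact hn1ne (toQ_eq_zero (by simpa using hi))
    obtain ⟨f, hfF, hf⟩ := hi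
    obtain ⟨q, hq, hqe⟩ := hn1ray
    have hipos : (0:ℚ) < (i:ℚ) := by exact_mod_cast Nat.pos_of_ne_zero hiz
    have hfray : f ∈ rayQ (toQ v1) := by
      refine ⟨q / i, by positivity, ?_⟩
      funext k
      have := congrFun hf k
      have hk := congrFun hqe k
      simp only [Pi.smul_apply, smul_eq_mul] at this hk ⊢
      have hik : (i:ℚ) * f k = q * toQ v1 k := this.trans hk
      field_simp
      linarith [hik]
    have hfp1 : f = P i1 := by
      have hmem : f ∈ Fs ∩ rayQ (toQ v1) := ⟨hfF, hfray⟩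
      rw [hP1] at hmem
      exact hmem
    exact ⟨i, Nat.pos_of_ne_zero hiz, by rw [← hf, hfp1]⟩
  have hp1ne : P i1 ≠ 0 := by
    intro h
    apply hn1ne
    apply toQ_eq_zero
    rw [hk0, h]; simp
  obtain ⟨ii0, hii0⟩ : ∃ i0, 0 < P i1 i0 := by
    by_contra h
    push_neg at h
    exact hp1ne (funext fun i => le_antisymm (h i) (hpos i1 i))
  have hp1ray : P i1 ∈ rayQ (toQ v1) := by
    have h := Set.mem_singleton (P i1)
    rw [← hP1] at h
    exact h.2
  obtain ⟨p, hp0, hpv⟩ := hp1ray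
  have hppos : 0 < p := by
    rcases lt_or_eq_of_le hp0 with h | h
    · exact h
    · exfalso; apply hp1ne; rw [hpv, ← h]; simp
  -- absorption into the ray
  have hrayF : ∀ y ∈ Fs, ∀ c : ℚ, 0 ≤ c → y = c • P i1 → y = P i1 := by
    intro y hy c hc hyc
    have hmem : y ∈ Fs ∩ rayQ (toQ v1) := by
      refine ⟨hy, ⟨c * p, by positivity, ?_⟩⟩
      rw [hyc, hpv]; module
    rw [hP1] at hmem
    exact hmem
  -- V1 parameters
  have hV1mem : V1 ∈ crossSet (P i1) (P it) (P i2) j := by rw [hV1]; rfl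
  obtain ⟨hV1a, hV1b⟩ := hV1mem
  obtain ⟨a1, u, ha1, hu0, hau, hVu⟩ := hV1a
  obtain ⟨b1, w, hb1, hw0, hbw, hVw⟩ := hV1b
  have hu1 : u ≤ 1 := by linarith
  have hw1 : w ≤ 1 := by linarith
  have hV1i : ∀ i, V1 i = (j:ℚ) * P i1 i + (j:ℚ)*u*(P it i - P i1 i) := by
    intro i
    have h := congrFun hVu i
    simp only [Pi.add_apply, Pi.smul_apply, smul_eq_mul] at h
    linear_combination (-1) * h + ((j:ℚ) * P i1 i) * hau
  have hV2i : ∀ i, V1 i = ((j:ℚ)+1) * P i1 i + ((j:ℚ)+1)*w*(P i2 i - P i1 i) := by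
    intro i
    have h := congrFun hVw i
    simp only [Pi.add_apply, Pi.smul_apply, smul_eq_mul] at h
    linear_combination (-1) * h + (((j:ℚ)+1) * P i1 i) * hbw
  have hstar : ∀ i, (j:ℚ)*u*(P it i - P i1 i)
      = P i1 i + ((j:ℚ)+1)*w*(P i2 i - P i1 i) := by
    intro i
    have h1 := hV1i i
    have h2 := hV2i i
    linarith
  -- u > 0
  have hupos : 0 < u := by
    rcases lt_or_eq_of_le hu0 with h | h
    · exact h
    exfalso
    have hstar0 : ∀ i, (0:ℚ) = P i1 i + ((j:ℚ)+1)*w*(P i2 i - P i1 i) := by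
      intro i; have := hstar i; rw [← h] at this; simpa using this
    rcases lt_or_eq_of_le hw0 with hw | hw
    · -- w > 0
      have hjw : (0:ℚ) < ((j:ℚ)+1)*w := by positivity
      have hP2l : ∀ i, (((j:ℚ)+1)*w) * P i2 i = (((j:ℚ)+1)*w - 1) * P i1 i := by
        intro i; linear_combination (-1) * hstar0 i
      rcases lt_or_ge (((j:ℚ)+1)*w - 1) 0 with hlam | hlam
      · have h1 := hP2l ii0
        nlinarith [hpos i2 ii0, hii0, hjw]
      · have hP2eq : P i2 = ((((j:ℚ)+1)*w - 1)/(((j:ℚ)+1)*w)) • P i1 := by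
          funext i
          have := hP2l i
          simp only [Pi.smul_apply, smul_eq_mul]
          field_simp
          linarith
        have := hrayF (P i2) (hPmem i2) _ (by positivity) hP2eq
        have h2 := hP2l ii0
        rw [this] at h2
        nlinarith [hii0]
    · -- w = 0
      have := hstar0 ii0
      rw [← hw] at this
      simp at this
      nlinarith [hii0]
  have hju : (0:ℚ) < (j:ℚ)*u := by positivity
  -- helper: if j*u*(Pt i - P1 i) = P i1 i for all i then False
  have hPtconc : (∀ i, (j:ℚ)*u*(P it i - P i1 i) = P i1 i) → False := by
    intro hPt
    have hPteq : P it = (((j:ℚ)*u + 1)/((j:ℚ)*u)) • P i1 := by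
      funext i
      have := hPt i
      simp only [Pi.smul_apply, smul_eq_mul]
      field_simp
      linarith
    have hpt := hrayF (P it) (hPmem it) _ (by positivity) hPteq
    have h2 := hPt ii0
    rw [hpt] at h2
    nlinarith [hii0]
  have hwpos : 0 < w := by
    rcases lt_or_eq_of_le hw0 with h | h
    · exact h
    exfalso
    apply hPtconc
    intro i
    have := hstar i
    rw [← h] at this
    simpa using this
  have hPtne : P it ≠ P i1 := by
    intro h
    exact hnp ⟨0, by rw [h]; simp⟩
  have hP2ne : P i2 ≠ P i1 := by
    intro h
    apply hPtconc
    intro i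
    have := hstar i
    rw [h] at this
    simpa using this
  -- supporting functionals
  have hNC1 : ∀ c : ℚ, P i2 - P i1 ≠ c • (P it - P i1) := by
    intro c hc
    rcases eq_or_ne c 0 with rfl | hcne
    · simp at hc
      exact hP2ne (by funext i; have := congrFun hc i; simp [Pi.sub_apply] at this; linarith)
    · apply hnp
      refine ⟨c⁻¹, ?_⟩
      funext i
      have := congrFun hc i
      simp only [Pi.sub_apply, Pi.smul_apply, smul_eq_mul] at this ⊢
      field_simp
      linarith
  have hNC2 : ∀ c : ℚ, P it - P i1 ≠ c • (P i2 - P i1) := fun c hc => hnp ⟨c, hc⟩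
  have hP1Pt : P i1 ≠ P it := fun h => hPtne h.symm
  have hP1P2 : P i1 ≠ P i2 := fun h => hP2ne h.symm
  obtain ⟨ca, cb, hab1, hc1lt, hsupp1⟩ := halfplane hconv hedge1 (hPmem i2) hP1Pt hNC1
  obtain ⟨da, db, hab2, hc2lt, hsupp2⟩ := halfplane hconv hedge2 (hPmem it) hP1P2 hNC2
  -- key scalar identities
  have hkey1 : ca * P i1 0 + cb * P i1 1
      = -(((j:ℚ)+1)*w) * ((ca * P i2 0 + cb * P i2 1) - (ca * P i1 0 + cb * P i1 1)) := by
    linear_combination (-ca) * hstar 0 - cb * hstar 1 + ((j:ℚ)*u) * hab1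
  have hc1neg : ca * P i1 0 + cb * P i1 1 < 0 := by
    nlinarith [hkey1, mul_pos (mul_pos (by linarith : (0:ℚ) < (j:ℚ)+1) hwpos)
      (sub_pos.mpr hc1lt)]
  have hkey2 : da * P i1 0 + db * P i1 1
      = (j:ℚ)*u*((da * P it 0 + db * P it 1) - (da * P i1 0 + db * P i1 1)) := by
    linear_combination (-da) * hstar 0 - db * hstar 1 - (((j:ℚ)+1)*w) * hab2
  -- the key step
  have key : ∀ a ν : ℚ, 0 ≤ a → a ≤ 1 → 1 ≤ ν → ∀ m : ℕ,
      (((j:ℚ)+ν) • P i1 + (a*((j:ℚ)*u)) • (P it - P i1)) ∈ (m:ℚ) • Fs →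
      ∃ m' : ℕ, (((j:ℚ)+(ν-1)) • P i1 + (a*((j:ℚ)*u)) • (P it - P i1)) ∈ (m':ℚ) • Fs := by
    intro a ν ha0 ha1 hν m hzm
    obtain ⟨f, hfF, hfz⟩ := hzm
    have hφf := hsupp1 f hfF
    have hψf := hsupp2 f hfF
    have hz0 := congrFun hfz 0
    have hz1 := congrFun hfz 1
    simp only [Pi.add_apply, Pi.sub_apply, Pi.smul_apply, smul_eq_mul] at hz0 hz1
    have heqφ : (m:ℚ) * (ca * f 0 + cb * f 1)
        = ((j:ℚ)+ν) * (ca * P i1 0 + cb * P i1 1) := by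
      linear_combination ca * hz0 + cb * hz1 + (a*((j:ℚ)*u)) * hab1
    have heqψ : (m:ℚ) * (da * f 0 + db * f 1)
        = ((j:ℚ)+ν) * (da * P i1 0 + db * P i1 1)
          + (a*((j:ℚ)*u)) * ((da * P it 0 + db * P it 1) - (da * P i1 0 + db * P i1 1)) := by
      linear_combination da * hz0 + db * hz1
    have hm1 : (j:ℚ) + ν ≤ (m:ℚ) := by
      nlinarith [heqφ, hc1neg, mul_nonneg (Nat.cast_nonneg m : (0:ℚ) ≤ (m:ℚ))
        (sub_nonneg.mpr hφf)]
    have hM0 : (0:ℚ) ≤ (m:ℚ) - (j:ℚ) - ν := by linarith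
    have hβM : ((m:ℚ) - (j:ℚ) - ν) * ((j:ℚ)*u) ≤ a*((j:ℚ)*u) := by
      have hd2 : 0 < (da * P it 0 + db * P it 1) - (da * P i1 0 + db * P i1 1) :=
        sub_pos.mpr hc2lt
      have hmψ : (m:ℚ) * (da * P i1 0 + db * P i1 1) ≤ (m:ℚ) * (da * f 0 + db * f 1) :=
        mul_le_mul_of_nonneg_left hψf (Nat.cast_nonneg m)
      nlinarith [heqψ, hkey2, hmψ, hd2, hM0]
    have hmnat : 1 ≤ m := by
      have : (1:ℚ) ≤ (m:ℚ) := by linarith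
      exact_mod_cast this
    refine ⟨m - 1, ?_⟩
    have hcast : ((m - 1 : ℕ) : ℚ) = (m:ℚ) - 1 := by
      push_cast [Nat.cast_sub hmnat]; ring
    -- coefficients
    have hprod1 : 0 ≤ (1 - a) * ((j:ℚ)*u) := mul_nonneg (by linarith) hju.le
    have h3 : a*((j:ℚ)*u) ≤ (j:ℚ)*u := by nlinarith [hprod1]
    have hM1' : (m:ℚ) - (j:ℚ) - ν ≤ 1 := by
      by_contra hcon
      push_neg at hcon
      have hgt := mul_lt_mul_of_pos_right hcon hju
      rw [one_mul] at hgt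
      linarith [hβM, h3, hgt]
    have h1 : 0 ≤ ((m:ℚ) - (j:ℚ) - ν) * (((j:ℚ)+1)*(1-w)) :=
      mul_nonneg hM0 (mul_nonneg (by linarith) (by linarith))
    have h5 : 0 ≤ (1 - ((m:ℚ) - (j:ℚ) - ν)) * ((j:ℚ)*(1-u)) :=
      mul_nonneg (by linarith) (mul_nonneg (by linarith) (by linarith))
    have hδ0 : 0 ≤ (m:ℚ) - 1 - a*((j:ℚ)*u)
        + ((m:ℚ) - (j:ℚ) - ν)*((j:ℚ)*u - ((j:ℚ)+1)*w) := by nlinarith [h1, h3, h5, hν]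
    have hε0 : 0 ≤ a*((j:ℚ)*u) - ((m:ℚ) - (j:ℚ) - ν)*((j:ℚ)*u) := by linarith [hβM]
    have hζ0 : 0 ≤ ((m:ℚ) - (j:ℚ) - ν)*(((j:ℚ)+1)*w) :=
      mul_nonneg hM0 (by positivity)
    have hident : ((j:ℚ)+(ν-1)) • P i1 + (a*((j:ℚ)*u)) • (P it - P i1)
        = ((m:ℚ) - 1 - a*((j:ℚ)*u) + ((m:ℚ) - (j:ℚ) - ν)*((j:ℚ)*u - ((j:ℚ)+1)*w)) • P i1
          + (a*((j:ℚ)*u) - ((m:ℚ) - (j:ℚ) - ν)*((j:ℚ)*u)) • P it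
          + (((m:ℚ) - (j:ℚ) - ν)*(((j:ℚ)+1)*w)) • P i2 := by
      funext i
      simp only [Pi.add_apply, Pi.sub_apply, Pi.smul_apply, smul_eq_mul]
      linear_combination ((m:ℚ) - (j:ℚ) - ν) * hstar i
    rw [hcast, hident]
    exact conic3 hconv (hPmem i1) (hPmem it) (hPmem i2) hδ0 hε0 hζ0 (by ring)
      (by linarith [hm1, hν, hjQ])
  -- descent
  have down : ∀ (k : ℕ) (a ν : ℚ), 0 ≤ a → a ≤ 1 → (k:ℚ) ≤ ν → ∀ m : ℕ,
      (((j:ℚ)+ν) • P i1 + (a*((j:ℚ)*u)) • (P it - P i1)) ∈ (m:ℚ) • Fs →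
      ∃ m' : ℕ, (((j:ℚ)+(ν-(k:ℚ))) • P i1 + (a*((j:ℚ)*u)) • (P it - P i1)) ∈ (m':ℚ) • Fs := by
    intro k
    induction k with
    | zero => intro a ν _ _ _ m h; exact ⟨m, by simpa using h⟩
    | succ k ih =>
      intro a ν ha0 ha1 hk m h
      have hkc : ((k:ℚ)+1) ≤ ν := by push_cast at hk; linarith
      have h1ν : 1 ≤ ν := by
        have : (0:ℚ) ≤ (k:ℚ) := Nat.cast_nonneg k
        linarith
      obtain ⟨m', hm'⟩ := key a ν ha0 ha1 h1ν m h
      obtain ⟨m'', hm''⟩ := ih a (ν - 1) ha0 ha1 (by linarith) m' hm'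
      refine ⟨m'', ?_⟩
      have heq : ((j:ℚ)+(ν - 1 - (k:ℚ))) = ((j:ℚ)+(ν - ((k:ℚ)+1))) := by ring
      rw [heq] at hm''
      have hcast : ((k+1 : ℕ):ℚ) = (k:ℚ)+1 := by push_cast; ring
      rw [hcast]
      exact hm''
  -- Goal 1
  have main1 : ∀ x ∈ stripB (P i1) V1 j n1 (coneN S), x ∉ S → x + n1 ∉ S := by
    rintro x ⟨⟨D, hD, l, hl0, hxq⟩, -⟩ hxS hxn1
    obtain ⟨a1', a, ha1', ha0, hsum1, hDeq⟩ := hD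
    have ha1 : a ≤ 1 := by linarith
    have hxpt : toQ x = ((j:ℚ)+(l*(k0:ℚ))) • P i1 + (a*((j:ℚ)*u)) • (P it - P i1) := by
      funext i
      have hDi := congrFun hDeq i
      have hxi := congrFun hxq i
      have hni := congrFun hk0 i
      have hVi := hV1i i
      simp only [Pi.add_apply, Pi.sub_apply, Pi.smul_apply, smul_eq_mul] at hDi hxi hni ⊢
      rw [hxi, ← hDi, hVi, hni]
      linear_combination ((j:ℚ) * P i1 i) * hsum1
    rw [hS] at hxn1
    obtain ⟨m, hm⟩ := hxn1
    have hxn1pt : toQ (x + n1)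
        = ((j:ℚ)+(l*(k0:ℚ) + (k0:ℚ))) • P i1 + (a*((j:ℚ)*u)) • (P it - P i1) := by
      rw [toQ_add, hxpt, hk0]
      funext i
      simp only [Pi.add_apply, Pi.sub_apply, Pi.smul_apply, smul_eq_mul]
      ring
    rw [hxn1pt] at hm
    have hν0k : ((k0:ℕ):ℚ) ≤ l*(k0:ℚ) + (k0:ℚ) := by
      have h1 : 0 ≤ l*(k0:ℚ) := mul_nonneg hl0 (Nat.cast_nonneg k0)
      linarith
    obtain ⟨m', hm'⟩ := down k0 a (l*(k0:ℚ) + (k0:ℚ)) ha0 ha1 hν0k m hm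
    apply hxS
    rw [hS]
    refine ⟨m', ?_⟩
    have heq : l*(k0:ℚ) + (k0:ℚ) - (k0:ℚ) = l*(k0:ℚ) := by ring
    rw [heq] at hm'
    rw [hxpt]
    exact hm'
  -- semigroup closure facts
  have hSadd : ∀ x y : Fin 2 → ℕ, x ∈ S → y ∈ S → x + y ∈ S := by
    intro x y hx hy
    rw [hS] at hx hy ⊢
    exact polySG_add hconv hneF hx hy
  have hGS : ∀ g ∈ G, g ∈ S := by
    intro g hg
    rw [← hG.1]
    exact AddSubmonoid.subset_closure hg
  -- n1 ∈ G
  have hG1 : n1 ∈ G := by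
    have h0G : (0 : Fin 2 → ℕ) ∉ G := by
      intro h
      exact hG.2 0 h (AddSubmonoid.zero_mem _)
    have hdec : ∀ x : Fin 2 → ℕ, x ∈ AddSubmonoid.closure (G : Set (Fin 2 → ℕ)) →
        x = 0 ∨ ∃ g ∈ G, ∃ r ∈ AddSubmonoid.closure (G : Set (Fin 2 → ℕ)), x = g + r := by
      intro x hx
      induction hx using AddSubmonoid.closure_induction with
      | mem y hy => exact Or.inr ⟨y, hy, 0, zero_mem _, (add_zero y).symm⟩
      | zero => exact Or.inl rfl
      | add x y hxc hyc ihx ihy =>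
        rcases ihx with rfl | ⟨g, hg, r, hr, rfl⟩
        · rcases ihy with rfl | ⟨g, hg, r, hr, rfl⟩
          · exact Or.inl (by simp)
          · exact Or.inr ⟨g, hg, r, hr, by rw [zero_add]⟩
        · exact Or.inr ⟨g, hg, r + y, add_mem hr hyc, by rw [add_assoc]⟩
    have hn1cl : n1 ∈ AddSubmonoid.closure (G : Set (Fin 2 → ℕ)) := by
      have h := hn1S
      rw [← hG.1] at h
      exact h
    rcases hdec n1 hn1cl with h0 | ⟨g, hgG, r, hr, hgr⟩
    · exact absurd h0 hn1ne
    rcases eq_or_ne r 0 with rfl | hrne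
    · rw [add_zero] at hgr; rw [hgr]; exact hgG
    exfalso
    have hgS : g ∈ S := hGS g hgG
    have hrS : r ∈ S := by rw [← hG.1]; exact hr
    have hgne : g ≠ 0 := fun h => h0G (h ▸ hgG)
    have hcone : ∀ y : Fin 2 → ℕ, y ∈ S →
        ∃ a b : ℚ, 0 ≤ a ∧ 0 ≤ b ∧ toQ y = a • toQ v1 + b • toQ v2 := by
      intro y hy
      have hmem : toQ y ∈ coneQ (toQ '' S) := by
        refine ⟨1, fun _ => 1, fun _ => toQ y, fun _ => by norm_num,
          fun _ => ⟨y, hy, rfl⟩, by simp⟩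
      rw [hsimp.2.2.2] at hmem
      exact coneQ_two hmem
    obtain ⟨ag, bg, hag, hbg, hgrep⟩ := hcone g hgS
    obtain ⟨ar, br, har, hbr, hrrep⟩ := hcone r hrS
    obtain ⟨q, hq0, hqe⟩ := hn1ray
    have hv2ne : toQ v2 ≠ 0 := fun h => hsimp.2.1 (toQ_eq_zero h)
    have hsumrep : ∀ i, (bg + br) * toQ v2 i = (q - ag - ar) * toQ v1 i := by
      intro i
      have h1 := congrFun hgrep i
      have h2 := congrFun hrrep i
      have h3 := congrFun hqe i
      have h4 : toQ n1 i = toQ g i + toQ r i := by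
        rw [hgr, toQ_add]; simp
      simp only [Pi.add_apply, Pi.smul_apply, smul_eq_mul] at h1 h2 h3
      rw [h4, h1, h2] at h3
      linarith
    have hbgbr : bg + br = 0 := by
      by_contra hzz
      have hbb : 0 < bg + br := lt_of_le_of_ne (by linarith) (Ne.symm hzz)
      set c : ℚ := (q - ag - ar)/(bg + br) with hc_def
      have hv2c : toQ v2 = c • toQ v1 := by
        funext i
        have := hsumrep i
        simp only [Pi.smul_apply, smul_eq_mul, hc_def]
        field_simp
        linarith
      have hc0 : 0 ≤ c := by
        by_contra hcneg
        push_neg at hcneg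
        apply hv2ne
        funext i
        have h := congrFun hv2c i
        simp only [Pi.smul_apply, smul_eq_mul] at h
        have hge : (0:ℚ) ≤ toQ v2 i := by simp [toQ]
        have hge1 : (0:ℚ) ≤ toQ v1 i := by simp [toQ]
        have : c * toQ v1 i ≤ 0 := mul_nonpos_of_nonpos_of_nonneg hcneg.le hge1
        simp only [Pi.zero_apply]
        linarith [h, hge, this]
      have hcpos : 0 < c := by
        rcases lt_or_eq_of_le hc0 with h | h
        · exact h
        · exfalso; apply hv2ne; rw [hv2c, ← h]; simp
      apply hsimp.2.2.1
      unfold rayN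
      ext y
      simp only [Set.mem_setOf_eq]
      constructor
      · rintro ⟨qq, hqq, hyy⟩
        refine ⟨qq/c, by positivity, ?_⟩
        rw [hyy, hv2c]
        funext i
        simp only [Pi.smul_apply, smul_eq_mul]
        field_simp
      · rintro ⟨qq, hqq, hyy⟩
        refine ⟨qq*c, by positivity, ?_⟩
        rw [hyy, hv2c]
        funext i
        simp only [Pi.smul_apply, smul_eq_mul]
        ring
    have hbg0 : bg = 0 := by linarith
    have hbr0 : br = 0 := by linarith
    have hgray : g ∈ rayN v1 := by
      refine ⟨ag, hag, ?_⟩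
      rw [hgrep, hbg0]; funext i; simp
    have hming := hn1min g ⟨hgS, hgray⟩ hgne
    have hrpos : 0 < normSq r := by
      rcases Nat.eq_zero_or_pos (normSq r) with h | h
      · exfalso
        apply hrne
        unfold normSq at h
        have h1 : r 0 = 0 := by nlinarith
        have h2 : r 1 = 0 := by nlinarith
        funext i
        fin_cases i
        · exact h1
        · exact h2
      · exact h
    have hineq : normSq g + normSq r ≤ normSq (g + r) := by
      unfold normSq
      simp only [Pi.add_apply]
      nlinarith [Nat.zero_le (g 0 * r 0), Nat.zero_le (g 1 * r 1)]
    have hn1val : normSq n1 = normSq (g + r) := by rw [hgr]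
    linarith [hming, hineq, hn1val, hrpos]
  -- conclusion
  constructor
  · exact main1
  · ext x
    simp only [Set.mem_inter_iff]
    constructor
    · rintro ⟨hxS, hxB⟩
      exact ⟨fun g hg => hSadd x g hxS (hGS g hg), hxB⟩
    · rintro ⟨hxbar, hxB⟩
      refine ⟨?_, hxB⟩
      by_contra hxS
      exact main1 x hxB hxS (hxbar n1 hG1)
end

section
/- Let 𝔓 be a simplicial affine convex polygonal semigroup with cone 𝒞, with the sets ℬ_1, ℬ_2, Υ_1, Υ_2, Υ defined from the boundary structure of the dilations of F as in the boundary decomposition construction. Then 𝒞 = ℬ_1 ∪ ℬ_2 ∪ Υ_1 ∪ Υ_2 ∪ Υ. -/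
open Set
open scoped Pointwise

namespace S15


/-- The `v1`-coordinate linear functional. -/
noncomputable def alL (w1 w2 : Fin 2 → ℚ) : (Fin 2 → ℚ) →ₗ[ℚ] ℚ where
  toFun w := (w 0 * w2 1 - w 1 * w2 0) / (w1 0 * w2 1 - w1 1 * w2 0)
  map_add' x y := by simp only [Pi.add_apply]; ring
  map_smul' c x := by simp only [Pi.smul_apply, smul_eq_mul, RingHom.id_apply]; ring

noncomputable def beL (w1 w2 : Fin 2 → ℚ) : (Fin 2 → ℚ) →ₗ[ℚ] ℚ where
  toFun w := (w1 0 * w 1 - w1 1 * w 0) / (w1 0 * w2 1 - w1 1 * w2 0)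
  map_add' x y := by simp only [Pi.add_apply]; ring
  map_smul' c x := by simp only [Pi.smul_apply, smul_eq_mul, RingHom.id_apply]; ring

variable {w1 w2 : Fin 2 → ℚ}

theorem al_w1 (hd : w1 0 * w2 1 - w1 1 * w2 0 ≠ 0) : alL w1 w2 w1 = 1 := by
  simp only [alL, LinearMap.coe_mk, AddHom.coe_mk]
  exact div_self hd

theorem al_w2 : alL w1 w2 w2 = 0 := by
  simp only [alL, LinearMap.coe_mk, AddHom.coe_mk]
  rw [show w2 0 * w2 1 - w2 1 * w2 0 = 0 by ring, zero_div]

theorem be_w1 : beL w1 w2 w1 = 0 := by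
  simp only [beL, LinearMap.coe_mk, AddHom.coe_mk]
  rw [show w1 0 * w1 1 - w1 1 * w1 0 = 0 by ring, zero_div]

theorem be_w2 (hd : w1 0 * w2 1 - w1 1 * w2 0 ≠ 0) : beL w1 w2 w2 = 1 := by
  simp only [beL, LinearMap.coe_mk, AddHom.coe_mk]
  exact div_self hd

theorem repr (hd : w1 0 * w2 1 - w1 1 * w2 0 ≠ 0) (w : Fin 2 → ℚ) :
    alL w1 w2 w • w1 + beL w1 w2 w • w2 = w := by
  funext i
  fin_cases i <;>
  · simp only [alL, beL, LinearMap.coe_mk, AddHom.coe_mk, Pi.add_apply, Pi.smul_apply,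
      smul_eq_mul, Fin.zero_eta, Fin.mk_one]
    have hd' : w2 1 * w1 0 - w2 0 * w1 1 ≠ 0 := by intro h; apply hd; linarith
    field_simp
    ring

theorem coord_ext (hd : w1 0 * w2 1 - w1 1 * w2 0 ≠ 0) {u v : Fin 2 → ℚ} (h1 : alL w1 w2 u = alL w1 w2 v)
    (h2 : beL w1 w2 u = beL w1 w2 v) : u = v := by
  have := repr hd u
  rw [h1, h2, repr hd v] at this
  exact this.symm

theorem smul_mem_coneQ {G : Set (Fin 2 → ℚ)} {v : Fin 2 → ℚ} (hv : v ∈ G) {q : ℚ}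
    (hq : 0 ≤ q) : q • v ∈ coneQ G := by
  exact ⟨1, fun _ => q, fun _ => v, fun _ => hq, fun _ => hv, by simp⟩

theorem pair_mem_coneQ {G : Set (Fin 2 → ℚ)} {u v : Fin 2 → ℚ} (hu : u ∈ G) (hv : v ∈ G)
    {a b : ℚ} (ha : 0 ≤ a) (hb : 0 ≤ b) : a • u + b • v ∈ coneQ G := by
  refine ⟨2, ![a, b], ![u, v], ?_, ?_, ?_⟩
  · intro i; fin_cases i <;> assumption
  · intro i; fin_cases i <;> assumption
  · simp [Fin.sum_univ_two]

theorem coneQ_coord_nonneg {w1 w2 : Fin 2 → ℚ} {G : Set (Fin 2 → ℚ)}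
    (hG : ∀ g ∈ G, 0 ≤ alL w1 w2 g ∧ 0 ≤ beL w1 w2 g) {x : Fin 2 → ℚ}
    (hx : x ∈ coneQ G) : 0 ≤ alL w1 w2 x ∧ 0 ≤ beL w1 w2 x := by
  obtain ⟨n, q, f, hq, hf, rfl⟩ := hx
  constructor
  · rw [map_sum]
    exact Finset.sum_nonneg fun i _ => by
      rw [map_smul]; exact mul_nonneg (hq i) ((hG _ (hf i)).1)
  · rw [map_sum]
    exact Finset.sum_nonneg fun i _ => by
      rw [map_smul]; exact mul_nonneg (hq i) ((hG _ (hf i)).2)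

theorem line_param {ν : Set (Fin 2 → ℚ)} (hl : IsLine ν) {a b : Fin 2 → ℚ}
    (ha : a ∈ ν) (hb : b ∈ ν) (hab : a ≠ b) :
    ∀ x ∈ ν, ∃ s : ℚ, x = a + s • (b - a) := by
  obtain ⟨p, d, hd, rfl⟩ := hl
  obtain ⟨sa, rfl⟩ := ha
  obtain ⟨sb, rfl⟩ := hb
  have hs : sb - sa ≠ 0 := by
    intro h
    apply hab
    have : sa = sb := by linarith [sub_eq_zero.mp h]
    rw [this]
  rintro x ⟨s, rfl⟩
  refine ⟨(s - sa) / (sb - sa), ?_⟩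
  have : (p + sb • d) - (p + sa • d) = (sb - sa) • d := by
    rw [sub_smul]; abel
  rw [this, smul_smul, div_mul_cancel₀ _ hs, sub_smul]
  abel

theorem crossSet_shift {P1 Pt P2 : Fin 2 → ℚ} {j : ℕ} (hj : 0 < j) {V : Fin 2 → ℚ}
    (hV : V ∈ crossSet P1 Pt P2 j) (k : ℕ) : V + (k : ℚ) • P1 ∈ crossSet P1 Pt P2 (j + k) := by
  obtain ⟨⟨a, b, ha, hb, hab, hV1⟩, ⟨a', b', ha', hb', hab', hV2⟩⟩ := hV
  have hjQ : (0 : ℚ) < j := by exact_mod_cast hj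
  have hjkQ : (0 : ℚ) < j + k := by positivity
  have hjk1Q : (0 : ℚ) < (j : ℚ) + k + 1 := by positivity
  constructor
  · refine ⟨(a * j + k) / (j + k), b * j / (j + k), by positivity, by positivity, ?_, ?_⟩
    · field_simp
      push_cast
      linear_combination (j:ℚ) * hab
    · push_cast
      rw [← hV1]
      funext i
      simp only [Pi.add_apply, Pi.smul_apply, smul_eq_mul]
      field_simp
      ring
  · refine ⟨(a' * (j + 1) + k) / (j + k + 1), b' * (j + 1) / (j + k + 1), by positivity,
      by positivity, ?_, ?_⟩
    · field_simp
      push_cast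
      linear_combination ((j:ℚ)+1) * hab'
    · push_cast
      rw [← hV2]
      funext i
      simp only [Pi.add_apply, Pi.smul_apply, smul_eq_mul]
      field_simp
      ring



theorem toQ_eq_zero {x : Fin 2 → ℕ} : toQ x = 0 ↔ x = 0 := by
  constructor
  · intro h
    funext i
    have := congrFun h i
    simpa [toQ] using this
  · rintro rfl; funext i; simp [toQ]

theorem toQ_nonneg (x : Fin 2 → ℕ) (i : Fin 2) : 0 ≤ toQ x i := by
  simp [toQ]

theorem rayQ_eq_of_prop {w1 w2 : Fin 2 → ℚ} {c : ℚ} (hc : 0 < c) (h : w2 = c • w1) :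
    rayQ w1 = rayQ w2 := by
  ext x
  constructor
  · rintro ⟨q, hq, rfl⟩
    exact ⟨q / c, by positivity, by rw [h, smul_smul, div_mul_cancel₀ _ hc.ne']⟩
  · rintro ⟨q, hq, rfl⟩
    exact ⟨q * c, by positivity, by rw [h, smul_smul]⟩

theorem prop_of_det_zero {w1 w2 : Fin 2 → ℚ} (h1 : w1 ≠ 0) (h2 : w2 ≠ 0)
    (hnn1 : ∀ i, 0 ≤ w1 i) (hnn2 : ∀ i, 0 ≤ w2 i)
    (hdz : w1 0 * w2 1 - w1 1 * w2 0 = 0) : ∃ c : ℚ, 0 < c ∧ w2 = c • w1 := by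
  have hne : w1 0 ≠ 0 ∨ w1 1 ≠ 0 := by
    by_contra hcon
    push_neg at hcon
    apply h1
    funext i
    fin_cases i
    · exact hcon.1
    · exact hcon.2
  rcases hne with h0 | h0
  · refine ⟨w2 0 / w1 0, ?_, ?_⟩
    · rcases lt_or_eq_of_le (div_nonneg (hnn2 0) (hnn1 0)) with h | h
      · exact h
      · exfalso
        apply h2
        have hw20 : w2 0 = 0 := by
          field_simp at h
          linarith
        have hw21 : w2 1 = 0 := by
          have : w1 0 * w2 1 = 0 := by rw [sub_eq_zero] at hdz; rw [hdz, hw20]; ring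
          rcases mul_eq_zero.mp this with h' | h'
          · exact absurd h' h0
          · exact h'
        funext i; fin_cases i <;> simp [hw20, hw21]
    · have e0 : w2 0 = (w2 0 / w1 0) * w1 0 := by field_simp
      have e1 : w2 1 = (w2 0 / w1 0) * w1 1 := by
        rw [div_mul_eq_mul_div, eq_div_iff h0]
        rw [sub_eq_zero] at hdz
        linarith [hdz]
      funext i
      fin_cases i
      · exact e0
      · exact e1
  · refine ⟨w2 1 / w1 1, ?_, ?_⟩
    · rcases lt_or_eq_of_le (div_nonneg (hnn2 1) (hnn1 1)) with h | h
      · exact h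
      · exfalso
        apply h2
        have hw21 : w2 1 = 0 := by
          field_simp at h
          linarith
        have hw20 : w2 0 = 0 := by
          have h' : w1 1 * w2 0 = 0 := by rw [sub_eq_zero] at hdz; rw [← hdz, hw21]; ring
          rcases mul_eq_zero.mp h' with h'' | h''
          · exact absurd h'' h0
          · exact h''
        funext i; fin_cases i <;> simp [hw20, hw21]
    · have e0 : w2 0 = (w2 1 / w1 1) * w1 0 := by
        rw [div_mul_eq_mul_div, eq_div_iff h0]
        rw [sub_eq_zero] at hdz
        linarith [hdz]
      have e1 : w2 1 = (w2 1 / w1 1) * w1 1 := by field_simp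
      funext i
      fin_cases i
      · exact e0
      · exact e1


end S15

/-- With the regions `ℬ_1, ℬ_2, Υ_1, Υ_2, Υ` defined from the
boundary structure of the dilations of `F` (here in the case where `F` meets each
extremal ray in a single vertex), the cone satisfies
`𝒞 = ℬ_1 ∪ ℬ_2 ∪ Υ_1 ∪ Υ_2 ∪ Υ`. -/
theorem stmt15
    (t : ℕ) (P : Fin t → (Fin 2 → ℚ)) (hpos : ∀ j i, 0 ≤ P j i)
    (i1 it i2 d1 e1 e2 : Fin t)
    (S : Set (Fin 2 → ℕ)) (hS : S = polySG (convexHull ℚ (Set.range P)))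
    (G : Finset (Fin 2 → ℕ)) (hG : minimalGenSet S G)
    (v1 v2 : Fin 2 → ℕ) (hsimp : Simplicial S v1 v2)
    (hP1 : convexHull ℚ (Set.range P) ∩ rayQ (toQ v1) = {P i1})
    (hPd : convexHull ℚ (Set.range P) ∩ rayQ (toQ v2) = {P d1})
    (hedge1 : IsExtreme ℚ (convexHull ℚ (Set.range P)) (segment ℚ (P i1) (P it)))
    (hedge2 : IsExtreme ℚ (convexHull ℚ (Set.range P)) (segment ℚ (P i1) (P i2)))
    (hedge3 : IsExtreme ℚ (convexHull ℚ (Set.range P)) (segment ℚ (P d1) (P e1)))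
    (hedge4 : IsExtreme ℚ (convexHull ℚ (Set.range P)) (segment ℚ (P d1) (P e2)))
    (j1 j2 : ℕ) (hj1 : 0 < j1) (hj2 : 0 < j2)
    (hj1le : ∀ j' : ℕ, 0 < j' → (crossSet (P i1) (P it) (P i2) j').Nonempty → j1 ≤ j')
    (hj2le : ∀ j' : ℕ, 0 < j' → (crossSet (P d1) (P e1) (P e2) j').Nonempty → j2 ≤ j')
    (V1 V2 : Fin 2 → ℚ)
    (hV1 : crossSet (P i1) (P it) (P i2) j1 = {V1})
    (hV2 : crossSet (P d1) (P e1) (P e2) j2 = {V2})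
    (n1 n2 : Fin 2 → ℕ)
    (hn1 : IsMinOnRay S (rayN v1) n1) (hn2 : IsMinOnRay S (rayN v2) n2)
    (nu1 nu2 : Set (Fin 2 → ℚ)) (hl1 : IsLine nu1) (hl2 : IsLine nu2)
    (hnu1 : ∀ h : ℕ, j1 ≤ h → crossSet (P i1) (P it) (P i2) h ⊆ nu1)
    (hnu2 : ∀ h : ℕ, j2 ≤ h → crossSet (P d1) (P e1) (P e2) h ⊆ nu2)
    (W1 W2 : Fin 2 → ℚ)
    (hW1 : nu1 ∩ rayQ (toQ v2) = {W1}) (hW2 : nu2 ∩ rayQ (toQ v1) = {W2})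
    (Qpt : Fin 2 → ℚ) (hQ : nu1 ∩ nu2 = {Qpt})
    :
    coneN S =
      stripB (P i1) V1 j1 n1 (coneN S) ∪ stripB (P d1) V2 j2 n2 (coneN S) ∪
        Ups j1 (P i1) V1 W1 ∪ Ups j2 (P d1) V2 W2 ∪
          UpsMain Qpt (convexHull ℚ (Set.range P)) := by
  obtain ⟨hv1, hv2, hrayne, hcone⟩ := hsimp
  have hw1ne : toQ v1 ≠ 0 := fun h => hv1 (S15.toQ_eq_zero.mp h)
  have hw2ne : toQ v2 ≠ 0 := fun h => hv2 (S15.toQ_eq_zero.mp h)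
  set w1 := toQ v1 with hw1def
  set w2 := toQ v2 with hw2def
  set F := convexHull ℚ (Set.range P) with hFdef
  -- determinant is nonzero
  have hd : w1 0 * w2 1 - w1 1 * w2 0 ≠ 0 := by
    intro hdz
    obtain ⟨c, hc, hcc⟩ := S15.prop_of_det_zero hw1ne hw2ne
      (S15.toQ_nonneg v1) (S15.toQ_nonneg v2) hdz
    apply hrayne
    have hre : rayQ w1 = rayQ w2 := S15.rayQ_eq_of_prop hc hcc
    unfold rayN
    rw [← hw1def, ← hw2def, hre]
  set al := S15.alL w1 w2 with haldef
  set be := S15.beL w1 w2 with hbedef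
  have halw1 : al w1 = 1 := S15.al_w1 hd
  have halw2 : al w2 = 0 := S15.al_w2
  have hbew1 : be w1 = 0 := S15.be_w1
  have hbew2 : be w2 = 1 := S15.be_w2 hd
  -- cone membership in coordinates
  have hmemK : ∀ w : Fin 2 → ℚ, w ∈ coneQ (toQ '' S) → 0 ≤ al w ∧ 0 ≤ be w := by
    intro w hw
    rw [hcone] at hw
    refine S15.coneQ_coord_nonneg ?_ hw
    rintro g (rfl | hg)
    · rw [halw1, hbew1]; norm_num
    · rw [Set.mem_singleton_iff] at hg
      subst hg
      rw [halw2, hbew2]; norm_num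
  have hKmem : ∀ w : Fin 2 → ℚ, 0 ≤ al w → 0 ≤ be w → w ∈ coneQ (toQ '' S) := by
    intro w h1 h2
    rw [hcone]
    have hr := S15.repr hd w
    rw [haldef, hbedef] at *
    rw [← hr]
    exact S15.pair_mem_coneQ (show w1 ∈ ({w1, w2} : Set (Fin 2 → ℚ)) by simp)
      (show w2 ∈ ({w1, w2} : Set (Fin 2 → ℚ)) by simp) h1 h2
  have hSin : ∀ x ∈ S, 0 ≤ al (toQ x) ∧ 0 ≤ be (toQ x) := by
    intro x hx
    apply hmemK
    have h1 : (1:ℚ) • toQ x ∈ coneQ (toQ '' S) :=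
      S15.smul_mem_coneQ (Set.mem_image_of_mem toQ hx) zero_le_one
    simpa using h1
  -- `P i1 = q1 • w1` with `q1 > 0`
  have hkey1 : ∃ q : ℚ, 0 < q ∧ P i1 = q • w1 := by
    obtain ⟨c1, hc1nn, hc1e⟩ := hn1.1.2
    have hn1ne : toQ n1 ≠ 0 := fun h => hn1.2.1 (S15.toQ_eq_zero.mp h)
    have hc1 : 0 < c1 := by
      rcases hc1nn.lt_or_eq with h | h
      · exact h
      · exfalso; apply hn1ne; rw [hc1e, ← h, zero_smul]
    have hn1S : n1 ∈ polySG F := hS ▸ hn1.1.1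
    obtain ⟨i, hiF⟩ := hn1S
    have hi : i ≠ 0 := by
      rintro rfl
      rw [Nat.cast_zero, zero_smul_set ⟨P i1, subset_convexHull ℚ _ (Set.mem_range_self i1)⟩]
        at hiF
      exact hn1ne hiF
    have hiQ : (0:ℚ) < i := by exact_mod_cast Nat.pos_of_ne_zero hi
    obtain ⟨f, hfF, hfe⟩ := hiF
    have hfe' : (i:ℚ) • f = toQ n1 := hfe
    have hfeq : f = (c1/(i:ℚ)) • w1 := by
      have h1 : ((i:ℚ)⁻¹ * (i:ℚ)) • f = (i:ℚ)⁻¹ • ((i:ℚ) • f) := by rw [mul_smul]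
      rw [inv_mul_cancel₀ hiQ.ne', one_smul] at h1
      rw [h1, hfe', hc1e, ← hw1def, smul_smul, div_eq_inv_mul]
    have hfmem : f ∈ F ∩ rayQ w1 := ⟨hfF, c1/(i:ℚ), by positivity, hfeq⟩
    rw [hP1, Set.mem_singleton_iff] at hfmem
    exact ⟨c1/(i:ℚ), by positivity, hfmem ▸ hfeq⟩
  obtain ⟨q1, hq1, hP1eq⟩ := hkey1
  have hkey2 : ∃ q : ℚ, 0 < q ∧ P d1 = q • w2 := by
    obtain ⟨c2, hc2nn, hc2e⟩ := hn2.1.2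
    have hn2ne : toQ n2 ≠ 0 := fun h => hn2.2.1 (S15.toQ_eq_zero.mp h)
    have hc2 : 0 < c2 := by
      rcases hc2nn.lt_or_eq with h | h
      · exact h
      · exfalso; apply hn2ne; rw [hc2e, ← h, zero_smul]
    have hn2S : n2 ∈ polySG F := hS ▸ hn2.1.1
    obtain ⟨i, hiF⟩ := hn2S
    have hi : i ≠ 0 := by
      rintro rfl
      rw [Nat.cast_zero, zero_smul_set ⟨P i1, subset_convexHull ℚ _ (Set.mem_range_self i1)⟩]
        at hiF
      exact hn2ne hiF
    have hiQ : (0:ℚ) < i := by exact_mod_cast Nat.pos_of_ne_zero hi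
    obtain ⟨f, hfF, hfe⟩ := hiF
    have hfe' : (i:ℚ) • f = toQ n2 := hfe
    have hfeq : f = (c2/(i:ℚ)) • w2 := by
      have h1 : ((i:ℚ)⁻¹ * (i:ℚ)) • f = (i:ℚ)⁻¹ • ((i:ℚ) • f) := by rw [mul_smul]
      rw [inv_mul_cancel₀ hiQ.ne', one_smul] at h1
      rw [h1, hfe', hc2e, ← hw2def, smul_smul, div_eq_inv_mul]
    have hfmem : f ∈ F ∩ rayQ w2 := ⟨hfF, c2/(i:ℚ), by positivity, hfeq⟩
    rw [hPd, Set.mem_singleton_iff] at hfmem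
    exact ⟨c2/(i:ℚ), by positivity, hfmem ▸ hfeq⟩
  obtain ⟨q2, hq2, hPdeq⟩ := hkey2
  have halP1 : al (P i1) = q1 := by rw [hP1eq, map_smul, halw1, smul_eq_mul, mul_one]
  have hbeP1 : be (P i1) = 0 := by rw [hP1eq, map_smul, hbew1, smul_eq_mul, mul_zero]
  have halPd : al (P d1) = 0 := by rw [hPdeq, map_smul, halw2, smul_eq_mul, mul_zero]
  have hbePd : be (P d1) = q2 := by rw [hPdeq, map_smul, hbew2, smul_eq_mul, mul_one]
  -- coordinates of `toQ n1`, `toQ n2`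
  obtain ⟨c1, hc1nn, hc1e⟩ := hn1.1.2
  have hc1 : 0 < c1 := by
    rcases hc1nn.lt_or_eq with h | h
    · exact h
    · exfalso
      apply hn1.2.1
      apply S15.toQ_eq_zero.mp
      rw [hc1e, ← h, zero_smul]
  obtain ⟨c2, hc2nn, hc2e⟩ := hn2.1.2
  have hc2 : 0 < c2 := by
    rcases hc2nn.lt_or_eq with h | h
    · exact h
    · exfalso
      apply hn2.2.1
      apply S15.toQ_eq_zero.mp
      rw [hc2e, ← h, zero_smul]
  have haln1 : al (toQ n1) = c1 := by
    rw [hc1e, ← hw1def, map_smul, halw1, smul_eq_mul, mul_one]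
  have hben1 : be (toQ n1) = 0 := by
    rw [hc1e, ← hw1def, map_smul, hbew1, smul_eq_mul, mul_zero]
  have haln2 : al (toQ n2) = 0 := by
    rw [hc2e, ← hw2def, map_smul, halw2, smul_eq_mul, mul_zero]
  have hben2 : be (toQ n2) = c2 := by
    rw [hc2e, ← hw2def, map_smul, hbew2, smul_eq_mul, mul_one]
  -- the vertices of `F` have nonnegative coordinates
  have hPK : ∀ j : Fin t, 0 ≤ al (P j) ∧ 0 ≤ be (P j) := by
    intro j
    have hp0 : 0 ≤ P j 0 := hpos j 0
    have hp1 : 0 ≤ P j 1 := hpos j 1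
    have hd0 : ((P j 0).den : ℚ) ≠ 0 := Nat.cast_ne_zero.mpr (Rat.den_ne_zero _)
    have hd1 : ((P j 1).den : ℚ) ≠ 0 := Nat.cast_ne_zero.mpr (Rat.den_ne_zero _)
    have e0 : ((P j 0).num : ℚ) = P j 0 * (P j 0).den := by
      have h := Rat.num_div_den (P j 0)
      rw [div_eq_iff hd0] at h
      exact h
    have e1 : ((P j 1).num : ℚ) = P j 1 * (P j 1).den := by
      have h := Rat.num_div_den (P j 1)
      rw [div_eq_iff hd1] at h
      exact h
    have hnum0 : (((P j 0).num.toNat : ℕ) : ℚ) = ((P j 0).num : ℚ) := by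
      exact_mod_cast congrArg (Int.cast : ℤ → ℚ)
        (Int.toNat_of_nonneg (Rat.num_nonneg.mpr hp0))
    have hnum1 : (((P j 1).num.toNat : ℕ) : ℚ) = ((P j 1).num : ℚ) := by
      exact_mod_cast congrArg (Int.cast : ℤ → ℚ)
        (Int.toNat_of_nonneg (Rat.num_nonneg.mpr hp1))
    set N : ℕ := (P j 0).den * (P j 1).den with hNdef
    set y : Fin 2 → ℕ := ![(P j 1).den * (P j 0).num.toNat, (P j 0).den * (P j 1).num.toNat]
      with hydef
    have hxq : toQ y = (N : ℚ) • P j := by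
      funext k
      fin_cases k
      · show (((P j 1).den * (P j 0).num.toNat : ℕ) : ℚ) = ((N : ℕ) : ℚ) * P j 0
        rw [hNdef]
        push_cast
        rw [hnum0]
        linear_combination ((P j 1).den : ℚ) * e0
      · show (((P j 0).den * (P j 1).num.toNat : ℕ) : ℚ) = ((N : ℕ) : ℚ) * P j 1
        rw [hNdef]
        push_cast
        rw [hnum1]
        linear_combination ((P j 0).den : ℚ) * e1
    have hxF : toQ y ∈ (N : ℚ) • F := by
      rw [hxq]
      exact Set.smul_mem_smul_set (subset_convexHull ℚ _ (Set.mem_range_self j))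
    have hxS : y ∈ S := by
      rw [hS]
      exact ⟨N, hxF⟩
    have hNQ : (0:ℚ) < ((N : ℕ) : ℚ) := by
      rw [hNdef]
      have h0 := Rat.den_pos (P j 0)
      have h1 := Rat.den_pos (P j 1)
      positivity
    obtain ⟨hA, hB⟩ := hSin _ hxS
    rw [hxq, map_smul, smul_eq_mul] at hA hB
    have hA' : ((N:ℕ):ℚ) * 0 ≤ ((N:ℕ):ℚ) * al (P j) := by rw [mul_zero]; exact hA
    have hB' : ((N:ℕ):ℚ) * 0 ≤ ((N:ℕ):ℚ) * be (P j) := by rw [mul_zero]; exact hB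
    exact ⟨le_of_mul_le_mul_left hA' hNQ, le_of_mul_le_mul_left hB' hNQ⟩
  have hKconvex : Convex ℚ {w : Fin 2 → ℚ | 0 ≤ al w ∧ 0 ≤ be w} := by
    intro u hu v hv a b ha hb hab
    simp only [Set.mem_setOf_eq] at hu hv ⊢
    simp only [map_add, map_smul, smul_eq_mul]
    exact ⟨add_nonneg (mul_nonneg ha hu.1) (mul_nonneg hb hv.1),
      add_nonneg (mul_nonneg ha hu.2) (mul_nonneg hb hv.2)⟩
  have hFK : ∀ f ∈ F, 0 ≤ al f ∧ 0 ≤ be f := by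
    intro f hf
    have hsub : F ⊆ {w : Fin 2 → ℚ | 0 ≤ al w ∧ 0 ≤ be w} :=
      convexHull_min (by rintro g ⟨j, rfl⟩; exact hPK j) hKconvex
    exact hsub hf
  -- V1 and V2 have nonnegative coordinates
  have hV1mem : V1 ∈ crossSet (P i1) (P it) (P i2) j1 := by rw [hV1]; exact rfl
  have hV2mem : V2 ∈ crossSet (P d1) (P e1) (P e2) j2 := by rw [hV2]; exact rfl
  have hsmulK : ∀ (c : ℚ) (u : Fin 2 → ℚ), 0 ≤ c → 0 ≤ al u → 0 ≤ be u →
      0 ≤ al (c • u) ∧ 0 ≤ be (c • u) := by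
    intro c u hc h1 h2
    rw [map_smul, map_smul, smul_eq_mul, smul_eq_mul]
    exact ⟨mul_nonneg hc h1, mul_nonneg hc h2⟩
  have hV1K : 0 ≤ al V1 ∧ 0 ≤ be V1 := by
    have h1 := hsmulK (j1:ℚ) (P i1) (by positivity) (hPK i1).1 (hPK i1).2
    have h2 := hsmulK (j1:ℚ) (P it) (by positivity) (hPK it).1 (hPK it).2
    exact hKconvex.segment_subset ⟨h1.1, h1.2⟩ ⟨h2.1, h2.2⟩ hV1mem.1
  have hV2K : 0 ≤ al V2 ∧ 0 ≤ be V2 := by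
    have h1 := hsmulK (j2:ℚ) (P d1) (by positivity) (hPK d1).1 (hPK d1).2
    have h2 := hsmulK (j2:ℚ) (P e1) (by positivity) (hPK e1).1 (hPK e1).2
    exact hKconvex.segment_subset ⟨h1.1, h1.2⟩ ⟨h2.1, h2.2⟩ hV2mem.1
  -- the lines in coordinates
  have hP1ne : P i1 ≠ 0 := by
    rw [hP1eq]
    exact smul_ne_zero hq1.ne' hw1ne
  have hPdne : P d1 ≠ 0 := by
    rw [hPdeq]
    exact smul_ne_zero hq2.ne' hw2ne
  have hnu1be : ∀ y ∈ nu1, be y = be V1 := by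
    have hV1nu : V1 ∈ nu1 := hnu1 j1 le_rfl hV1mem
    have hV1'nu : V1 + P i1 ∈ nu1 := by
      have h := hnu1 (j1+1) (Nat.le_succ j1) (S15.crossSet_shift hj1 hV1mem 1)
      simpa using h
    intro y hy
    obtain ⟨s, rfl⟩ := S15.line_param hl1 hV1nu hV1'nu
      (fun h => hP1ne (add_eq_left.mp h.symm)) y hy
    rw [add_sub_cancel_left]
    rw [map_add, map_smul, hP1eq, map_smul, hbew1, smul_eq_mul, smul_eq_mul]
    ring
  have hnu2al : ∀ y ∈ nu2, al y = al V2 := by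
    have hV2nu : V2 ∈ nu2 := hnu2 j2 le_rfl hV2mem
    have hV2'nu : V2 + P d1 ∈ nu2 := by
      have h := hnu2 (j2+1) (Nat.le_succ j2) (S15.crossSet_shift hj2 hV2mem 1)
      simpa using h
    intro y hy
    obtain ⟨s, rfl⟩ := S15.line_param hl2 hV2nu hV2'nu
      (fun h => hPdne (add_eq_left.mp h.symm)) y hy
    rw [add_sub_cancel_left]
    rw [map_add, map_smul, hPdeq, map_smul, halw2, smul_eq_mul, smul_eq_mul]
    ring
  -- coordinates of W1, W2, Qpt
  have hW1m : W1 ∈ nu1 ∩ rayQ w2 := by rw [hW1]; exact rfl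
  have hW2m : W2 ∈ nu2 ∩ rayQ w1 := by rw [hW2]; exact rfl
  have hQm : Qpt ∈ nu1 ∩ nu2 := by rw [hQ]; exact rfl
  have hbeW1 : be W1 = be V1 := hnu1be W1 hW1m.1
  have halW1 : al W1 = 0 := by
    obtain ⟨qw, hqw, hWe⟩ := hW1m.2
    rw [hWe, map_smul, halw2, smul_eq_mul, mul_zero]
  have halW2 : al W2 = al V2 := hnu2al W2 hW2m.1
  have hbeW2 : be W2 = 0 := by
    obtain ⟨qw, hqw, hWe⟩ := hW2m.2
    rw [hWe, map_smul, hbew1, smul_eq_mul, mul_zero]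
  have hbeQ : be Qpt = be V1 := hnu1be Qpt hQm.1
  have halQ : al Qpt = al V2 := hnu2al Qpt hQm.2
  -- now the set equality
  ext x
  simp only [Set.mem_union]
  constructor
  · -- covering direction
    intro hx
    have hxK := hmemK (toQ x) hx
    set a := al (toQ x) with hadef
    set b := be (toQ x) with hbdef
    obtain ⟨ha, hb⟩ := hxK
    by_cases hbb : b ≤ be V1
    · -- side 1 : x ∈ ℬ1 ∪ Υ1
      obtain ⟨θ, hθ0, hθ1, hθb⟩ : ∃ θ : ℚ, 0 ≤ θ ∧ θ ≤ 1 ∧ θ * be V1 = b := by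
        rcases (lt_or_eq_of_le hV1K.2) with h | h
        · exact ⟨b / be V1, by positivity, by rw [div_le_one h]; exact hbb,
            div_mul_cancel₀ _ h.ne'⟩
        · refine ⟨0, le_rfl, zero_le_one, ?_⟩
          have hb0 : b = 0 := le_antisymm (h ▸ hbb) hb
          rw [hb0, zero_mul]
      have hDseg : (1-θ) • ((j1:ℚ) • P i1) + θ • V1 ∈ segment ℚ ((j1:ℚ) • P i1) V1 :=
        ⟨1-θ, θ, by linarith, hθ0, by ring, rfl⟩
      set D := (1-θ) • ((j1:ℚ) • P i1) + θ • V1 with hDdef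
      have halD : al D = (1-θ) * ((j1:ℚ) * q1) + θ * al V1 := by
        rw [hDdef, map_add, map_smul, map_smul, map_smul, halP1, smul_eq_mul,
          smul_eq_mul, smul_eq_mul]
      have hbeD : be D = b := by
        rw [hDdef, map_add, map_smul, map_smul, map_smul, hbeP1, smul_eq_mul,
          smul_eq_mul, smul_eq_mul]
        rw [← hθb]
        ring
      rcases le_or_gt (al D) a with hle | hlt
      · -- x ∈ ℬ1
        refine Or.inl (Or.inl (Or.inl (Or.inl ⟨⟨D, hDseg, (a - al D)/c1,
          div_nonneg (by linarith) hc1.le, ?_⟩, hx⟩)))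
        apply S15.coord_ext hd
        · rw [map_add, map_smul, haln1, ← hadef, smul_eq_mul,
            div_mul_cancel₀ _ hc1.ne']
          ring
        · rw [map_add, map_smul, hben1, ← hbdef, hbeD, smul_eq_mul]
          ring
      · -- x ∈ Υ1
        refine Or.inl (Or.inl (Or.inr ?_))
        show toQ x ∈ convexHull ℚ {0, (j1:ℚ) • P i1, V1, W1}
        have hDpos : 0 < al D := lt_of_le_of_lt ha hlt
        set μ := a / al D with hμdef
        have hμ0 : 0 ≤ μ := by positivity
        have hμ1 : μ ≤ 1 := by rw [hμdef, div_le_one hDpos]; exact hlt.le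
        have hmem0 : (0 : Fin 2 → ℚ) ∈ convexHull ℚ {0, (j1:ℚ) • P i1, V1, W1} :=
          subset_convexHull ℚ _ (by simp)
        have hmemA : ((j1:ℚ) • P i1) ∈ convexHull ℚ {0, (j1:ℚ) • P i1, V1, W1} :=
          subset_convexHull ℚ _ (by simp)
        have hmemV : V1 ∈ convexHull ℚ {0, (j1:ℚ) • P i1, V1, W1} :=
          subset_convexHull ℚ _ (by simp)
        have hmemW : W1 ∈ convexHull ℚ {0, (j1:ℚ) • P i1, V1, W1} :=
          subset_convexHull ℚ _ (by simp)
        have hEL : (1-θ) • (0 : Fin 2 → ℚ) + θ • W1 ∈ convexHull ℚ {0, (j1:ℚ) • P i1, V1, W1} :=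
          (convex_convexHull ℚ _) hmem0 hmemW (by linarith) hθ0 (by ring)
        have hER : D ∈ convexHull ℚ {0, (j1:ℚ) • P i1, V1, W1} := by
          rw [hDdef]
          exact (convex_convexHull ℚ _) hmemA hmemV (by linarith) hθ0 (by ring)
        have hgoal : toQ x = (1-μ) • ((1-θ) • (0 : Fin 2 → ℚ) + θ • W1) + μ • D := by
          apply S15.coord_ext hd
          · rw [map_add, map_smul, map_smul, map_add, map_smul, map_smul, map_zero,
              halW1, ← hadef]
            simp only [smul_eq_mul]
            rw [hμdef]
            field_simp
            rw [← haldef]; ring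
          · rw [map_add, map_smul, map_smul, map_add, map_smul, map_smul, map_zero,
              hbeW1, ← hbdef, hbeD]
            simp only [smul_eq_mul]
            rw [← hθb]
            ring
        rw [hgoal]
        exact (convex_convexHull ℚ _) hEL hER (by linarith) hμ0 (by ring)
    · by_cases haa : a ≤ al V2
      · -- side 2 : x ∈ ℬ2 ∪ Υ2
        obtain ⟨θ, hθ0, hθ1, hθb⟩ : ∃ θ : ℚ, 0 ≤ θ ∧ θ ≤ 1 ∧ θ * al V2 = a := by
          rcases (lt_or_eq_of_le hV2K.1) with h | h
          · exact ⟨a / al V2, by positivity, by rw [div_le_one h]; exact haa,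
              div_mul_cancel₀ _ h.ne'⟩
          · refine ⟨0, le_rfl, zero_le_one, ?_⟩
            have ha0 : a = 0 := le_antisymm (h ▸ haa) ha
            rw [ha0, zero_mul]
        have hDseg : (1-θ) • ((j2:ℚ) • P d1) + θ • V2 ∈ segment ℚ ((j2:ℚ) • P d1) V2 :=
          ⟨1-θ, θ, by linarith, hθ0, by ring, rfl⟩
        set D := (1-θ) • ((j2:ℚ) • P d1) + θ • V2 with hDdef
        have hbeD : be D = (1-θ) * ((j2:ℚ) * q2) + θ * be V2 := by
          rw [hDdef, map_add, map_smul, map_smul, map_smul, hbePd, smul_eq_mul,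
            smul_eq_mul, smul_eq_mul]
        have halD : al D = a := by
          rw [hDdef, map_add, map_smul, map_smul, map_smul, halPd, smul_eq_mul,
            smul_eq_mul, smul_eq_mul]
          rw [← hθb]
          ring
        rcases le_or_gt (be D) b with hle | hlt
        · -- x ∈ ℬ2
          refine Or.inl (Or.inl (Or.inl (Or.inr ⟨⟨D, hDseg, (b - be D)/c2,
            div_nonneg (by linarith) hc2.le, ?_⟩, hx⟩)))
          apply S15.coord_ext hd
          · rw [map_add, map_smul, haln2, ← hadef, halD, smul_eq_mul]
            ring
          · rw [map_add, map_smul, hben2, ← hbdef, smul_eq_mul,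
              div_mul_cancel₀ _ hc2.ne']
            ring
        · -- x ∈ Υ2
          refine Or.inl (Or.inr ?_)
          show toQ x ∈ convexHull ℚ {0, (j2:ℚ) • P d1, V2, W2}
          have hDpos : 0 < be D := lt_of_le_of_lt hb hlt
          set μ := b / be D with hμdef
          have hμ0 : 0 ≤ μ := by positivity
          have hμ1 : μ ≤ 1 := by rw [hμdef, div_le_one hDpos]; exact hlt.le
          have hmem0 : (0 : Fin 2 → ℚ) ∈ convexHull ℚ {0, (j2:ℚ) • P d1, V2, W2} :=
            subset_convexHull ℚ _ (by simp)
          have hmemA : ((j2:ℚ) • P d1) ∈ convexHull ℚ {0, (j2:ℚ) • P d1, V2, W2} :=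
            subset_convexHull ℚ _ (by simp)
          have hmemV : V2 ∈ convexHull ℚ {0, (j2:ℚ) • P d1, V2, W2} :=
            subset_convexHull ℚ _ (by simp)
          have hmemW : W2 ∈ convexHull ℚ {0, (j2:ℚ) • P d1, V2, W2} :=
            subset_convexHull ℚ _ (by simp)
          have hEL : (1-θ) • (0 : Fin 2 → ℚ) + θ • W2 ∈
              convexHull ℚ {0, (j2:ℚ) • P d1, V2, W2} :=
            (convex_convexHull ℚ _) hmem0 hmemW (by linarith) hθ0 (by ring)
          have hER : D ∈ convexHull ℚ {0, (j2:ℚ) • P d1, V2, W2} := by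
            rw [hDdef]
            exact (convex_convexHull ℚ _) hmemA hmemV (by linarith) hθ0 (by ring)
          have hgoal : toQ x = (1-μ) • ((1-θ) • (0 : Fin 2 → ℚ) + θ • W2) + μ • D := by
            apply S15.coord_ext hd
            · rw [map_add, map_smul, map_smul, map_add, map_smul, map_smul, map_zero,
                halW2, ← hadef, halD]
              simp only [smul_eq_mul]
              rw [← hθb]
              ring
            · rw [map_add, map_smul, map_smul, map_add, map_smul, map_smul, map_zero,
                hbeW2, ← hbdef]
              simp only [smul_eq_mul]
              rw [hμdef]
              field_simp
              rw [← hbedef]; ring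
          rw [hgoal]
          exact (convex_convexHull ℚ _) hEL hER (by linarith) hμ0 (by ring)
      · -- x ∈ Υ
        push_neg at hbb haa
        refine Or.inr ⟨((a - al V2)/q1) • P i1 + ((b - be V1)/q2) • P d1, ?_, ?_⟩
        · exact S15.pair_mem_coneQ (subset_convexHull ℚ _ (Set.mem_range_self i1))
            (subset_convexHull ℚ _ (Set.mem_range_self d1))
            (div_nonneg (by linarith) hq1.le) (div_nonneg (by linarith) hq2.le)
        · apply S15.coord_ext hd
          · rw [map_add, map_add, map_smul, map_smul, halP1, halPd, halQ, ← hadef]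
            simp only [smul_eq_mul]
            rw [div_mul_cancel₀ _ hq1.ne']
            ring
          · rw [map_add, map_add, map_smul, map_smul, hbeP1, hbePd, hbeQ, ← hbdef]
            simp only [smul_eq_mul]
            rw [div_mul_cancel₀ _ hq2.ne']
            ring
  · -- reverse inclusion
    rintro ((((hB | hB) | hU) | hU) | hU)
    · exact hB.2
    · exact hB.2
    · -- Υ1 ⊆ 𝒞
      have hsub : convexHull ℚ {0, (j1:ℚ) • P i1, V1, W1} ⊆
          {w : Fin 2 → ℚ | 0 ≤ al w ∧ 0 ≤ be w} := by
        apply convexHull_min ?_ hKconvex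
        rintro g (rfl | rfl | rfl | hg)
        · simp only [Set.mem_setOf_eq, map_zero, le_refl, and_self]
        · exact hsmulK (j1:ℚ) (P i1) (by positivity) (hPK i1).1 (hPK i1).2
        · exact hV1K
        · rw [Set.mem_singleton_iff] at hg
          subst hg
          exact ⟨halW1 ▸ le_rfl, hbeW1 ▸ hV1K.2⟩
      have h := hsub hU
      exact hKmem _ h.1 h.2
    · -- Υ2 ⊆ 𝒞
      have hsub : convexHull ℚ {0, (j2:ℚ) • P d1, V2, W2} ⊆
          {w : Fin 2 → ℚ | 0 ≤ al w ∧ 0 ≤ be w} := by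
        apply convexHull_min ?_ hKconvex
        rintro g (rfl | rfl | rfl | hg)
        · simp only [Set.mem_setOf_eq, map_zero, le_refl, and_self]
        · exact hsmulK (j2:ℚ) (P d1) (by positivity) (hPK d1).1 (hPK d1).2
        · exact hV2K
        · rw [Set.mem_singleton_iff] at hg
          subst hg
          exact ⟨halW2 ▸ hV2K.1, hbeW2 ▸ le_rfl⟩
      have h := hsub hU
      exact hKmem _ h.1 h.2
    · -- Υ ⊆ 𝒞
      obtain ⟨y, hy, hxy⟩ := hU
      have hyK := S15.coneQ_coord_nonneg (fun g hg => hFK g hg) hy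
      show toQ x ∈ coneQ (toQ '' S)
      rw [hxy]
      apply hKmem
      · rw [map_add]
        have := hV2K.1
        rw [halQ]
        linarith [hyK.1]
      · rw [map_add]
        rw [hbeQ]
        linarith [hyK.2, hV1K.2]
end
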